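/- arXiv:1001.2381 — 4 statements merged into one kernel-verified Lean document; each statement's English description precedes it below -/
import Mathlib

section
/- Let T > 0 and let h : ℝ → ℝ be Lipschitz with constant c. Let x and x_n (n ∈ ℕ) be càdlàg functions on [0,T], and let y and y_n be bounded Borel measurable functions on [0,T] satisfying y(t) = x(t) + ∫₀ᵗ h(y(s)) ds and y_n(t) = x_n(t) + ∫₀ᵗ h(y_n(s)) ds for all t ∈ [0,T]. If d_{M₁}(x_n, x) → 0 as n → ∞, then d_{M₁}(y_n, y) → 0 as n → ∞. (Theorem 1.1: the integral representation map is continuous on D([0,T],ℝ) in the M₁ topology.) -/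
open Set Filter MeasureTheory Topology

/-- The left limit of `x` at `t`, with the convention `x(0−) = x(0)`. -/
noncomputable def leftL (x : ℝ → ℝ) (t : ℝ) : ℝ :=
  if t = 0 then x 0 else Function.leftLim x t

/-- `x` is càdlàg on `[0, T]`: right-continuous on `[0, T)` and with left limits on `(0, T]`. -/
def IsCadlagOn (T : ℝ) (x : ℝ → ℝ) : Prop :=
  (∀ t ∈ Set.Ico (0:ℝ) T, Filter.Tendsto x (nhdsWithin t (Set.Ici t)) (nhds (x t))) ∧
  (∀ t ∈ Set.Ioc (0:ℝ) T, ∃ L : ℝ, Filter.Tendsto x (nhdsWithin t (Set.Iio t)) (nhds L))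

/-- `(u, r)` is a parametric representation of the càdlàg function `x` on `[0, T]`. -/
def IsParamRep (T : ℝ) (x u r : ℝ → ℝ) : Prop :=
  ContinuousOn u (Set.Icc 0 1) ∧ ContinuousOn r (Set.Icc 0 1) ∧
  MonotoneOn r (Set.Icc 0 1) ∧ r 0 = 0 ∧ r 1 = T ∧
  (∀ s ∈ Set.Icc (0:ℝ) 1, u s ∈ segment ℝ (leftL x (r s)) (x (r s))) ∧
  (∀ t ∈ Set.Icc (0:ℝ) T, ∀ v ∈ segment ℝ (leftL x t) (x t),
    ∃ s ∈ Set.Icc (0:ℝ) 1, r s = t ∧ u s = v) ∧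
  (∀ s₁ ∈ Set.Icc (0:ℝ) 1, ∀ s₂ ∈ Set.Icc (0:ℝ) 1, s₁ ≤ s₂ → r s₁ = r s₂ →
    0 ≤ (u s₂ - u s₁) * (x (r s₁) - leftL x (r s₁)))

/-- Uniform norm over `[0, 1]`. -/
noncomputable def unif (f : ℝ → ℝ) : ℝ := ⨆ s : Set.Icc (0:ℝ) 1, |f s.1|

/-- Uniform norm over `[0, T]`. -/
noncomputable def supT (T : ℝ) (f : ℝ → ℝ) : ℝ := ⨆ t : Set.Icc (0:ℝ) T, |f t.1|

/-- The maximum-jump functional `J_max(x)` over `[0, T]`. -/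
noncomputable def Jmax (T : ℝ) (x : ℝ → ℝ) : ℝ :=
  ⨆ t : Set.Icc (0:ℝ) T, |x t.1 - leftL x t.1|

/-- The Skorohod `M₁` metric on `D([0, T], ℝ)`. -/
noncomputable def dM1 (T : ℝ) (x y : ℝ → ℝ) : ℝ :=
  sInf {d : ℝ | ∃ ux rx uy ry : ℝ → ℝ, IsParamRep T x ux rx ∧ IsParamRep T y uy ry ∧
    d = max (unif fun s => ux s - uy s) (unif fun s => rx s - ry s)}

/-- The `L₁` norm over `[0, 1]`. -/
noncomputable def L1norm (g : ℝ → ℝ) : ℝ := ∫ s in (0:ℝ)..1, |g s|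

/-- `r` is absolutely continuous on `[0,1]` with (integrable) derivative `r'`. -/
def AbsContOn01 (r r' : ℝ → ℝ) : Prop :=
  IntervalIntegrable r' MeasureTheory.volume 0 1 ∧
  ∀ s ∈ Set.Icc (0:ℝ) 1, r s = r 0 + ∫ w in (0:ℝ)..s, r' w

/-- `y` is bounded and Borel measurable on `[0, T]`. -/
def BddMeasOn (T : ℝ) (y : ℝ → ℝ) : Prop :=
  (∃ M : ℝ, ∀ t ∈ Set.Icc (0:ℝ) T, |y t| ≤ M) ∧
  Measurable fun t : Set.Icc (0:ℝ) T => y t.1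

/-- The `M₁` oscillation function `w_s(x, δ)` on `[0, T]`. -/
noncomputable def wOsc (T : ℝ) (x : ℝ → ℝ) (δ : ℝ) : ℝ :=
  sSup {v : ℝ | ∃ t ∈ Set.Icc (0:ℝ) T, ∃ t₁ t₂ t₃ : ℝ,
    max 0 (t - δ) ≤ t₁ ∧ t₁ < t₂ ∧ t₂ < t₃ ∧ t₃ ≤ min (t + δ) T ∧
    v = Metric.infDist (x t₂) (segment ℝ (x t₁) (x t₃))}

/-- The ordinary oscillation modulus `ν(x, δ)` on `[0, T]`. -/
noncomputable def nuOsc (T : ℝ) (x : ℝ → ℝ) (δ : ℝ) : ℝ :=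
  sSup {v : ℝ | ∃ t ∈ Set.Icc (0:ℝ) (T - δ), ∃ t₁ ∈ Set.Icc t (t + δ),
    ∃ t₂ ∈ Set.Icc t (t + δ), v = |x t₁ - x t₂|}

/-! ### Auxiliary lemmas -/

lemma bddMeas_intInt {f : ℝ → ℝ} (hf : Measurable f) {C : ℝ} (hC : ∀ s, |f s| ≤ C)
    (a b : ℝ) : IntervalIntegrable f volume a b := by
  rw [intervalIntegrable_iff]
  refine (integrableOn_const ?_).mono' hf.aestronglyMeasurable.restrict
    (ae_of_all _ fun s => hC s)
  exact measure_Ioc_lt_top.ne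

lemma primitive_lip {f : ℝ → ℝ} (hf : Measurable f) {C : ℝ} (hC : ∀ s, |f s| ≤ C) :
    ∀ a b : ℝ, |(∫ s in (0:ℝ)..b, f s) - ∫ s in (0:ℝ)..a, f s| ≤ C * |b - a| := by
  intro a b
  rw [intervalIntegral.integral_interval_sub_left (bddMeas_intInt hf hC 0 b)
    (bddMeas_intInt hf hC 0 a)]
  simpa using intervalIntegral.norm_integral_le_of_norm_le_const
    (f := f) (a := a) (b := b) (C := C) fun s _ => by simpa using hC s

lemma primitive_cont {f : ℝ → ℝ} (hf : Measurable f) {C : ℝ} (hC : ∀ s, |f s| ≤ C) :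
    Continuous (fun t => ∫ s in (0:ℝ)..t, f s) := by
  have hC0 : 0 ≤ C := le_trans (abs_nonneg _) (hC 0)
  have : LipschitzWith C.toNNReal (fun t => ∫ s in (0:ℝ)..t, f s) := by
    apply LipschitzWith.of_dist_le_mul
    intro a b
    rw [Real.dist_eq, Real.dist_eq, Real.coe_toNNReal C hC0]
    simpa [abs_sub_comm] using primitive_lip hf hC b a
  exact this.continuous

lemma exists_ext {T : ℝ} {y : ℝ → ℝ} (hM : ∃ M : ℝ, ∀ t ∈ Set.Icc (0:ℝ) T, |y t| ≤ M)
    (hmeas : Measurable fun t : Set.Icc (0:ℝ) T => y t.1) :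
    ∃ z : ℝ → ℝ, ∃ M : ℝ, Measurable z ∧ 0 ≤ M ∧ (∀ t ∈ Set.Icc (0:ℝ) T, z t = y t) ∧
      (∀ t, |z t| ≤ M) := by
  obtain ⟨M₀, hM₀⟩ := hM
  refine ⟨Function.extend (Subtype.val : Set.Icc (0:ℝ) T → ℝ) (fun t => y t.1) (fun _ => 0),
    max M₀ 0, (MeasurableEmbedding.subtype_coe measurableSet_Icc).measurable_extend hmeas
      measurable_const, le_max_right _ _, ?_, ?_⟩
  · intro t ht
    exact Subtype.val_injective.extend_apply (fun t : Set.Icc (0:ℝ) T => y t.1) (fun _ => 0) ⟨t, ht⟩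
  · intro t
    by_cases ht : t ∈ Set.Icc (0:ℝ) T
    · rw [show t = ((⟨t, ht⟩ : Set.Icc (0:ℝ) T) : ℝ) from rfl,
        Subtype.val_injective.extend_apply]
      exact le_max_of_le_left (hM₀ t ht)
    · rw [Function.extend_apply' _ _ _ (by rintro ⟨a, rfl⟩; exact ht a.2)]
      simp

lemma leftL_eq {x : ℝ → ℝ} {t L : ℝ} (ht : t ≠ 0)
    (hL : Tendsto x (nhdsWithin t (Set.Iio t)) (nhds L)) : leftL x t = L := by
  rw [leftL, if_neg ht]
  exact leftLim_eq_of_tendsto hL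

lemma cadlag_leftL_tendsto {T : ℝ} {x : ℝ → ℝ} (hx : IsCadlagOn T x) {t : ℝ}
    (ht : t ∈ Set.Ioc (0:ℝ) T) : Tendsto x (nhdsWithin t (Set.Iio t)) (nhds (leftL x t)) := by
  obtain ⟨L, hL⟩ := hx.2 t ht
  rwa [leftL_eq (ne_of_gt ht.1) hL]

lemma seg_translate {a b v γ : ℝ} :
    v ∈ segment ℝ a b ↔ v + γ ∈ segment ℝ (a + γ) (b + γ) := by
  simp only [segment_eq_uIcc, Set.mem_uIcc]
  constructor <;> rintro (⟨h1, h2⟩ | ⟨h1, h2⟩)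
  · exact Or.inl ⟨by linarith, by linarith⟩
  · exact Or.inr ⟨by linarith, by linarith⟩
  · exact Or.inl ⟨by linarith, by linarith⟩
  · exact Or.inr ⟨by linarith, by linarith⟩

lemma seg_dist_bound {a b v w : ℝ} (hv : v ∈ segment ℝ a b) :
    |v - w| ≤ max (|a - w|) (|b - w|) := by
  rw [segment_eq_uIcc, Set.mem_uIcc] at hv
  have h1 := le_max_left (|a - w|) (|b - w|)
  have h2 := le_max_right (|a - w|) (|b - w|)
  have h3 := le_abs_self (a - w); have h4 := neg_abs_le (a - w)
  have h5 := le_abs_self (b - w); have h6 := neg_abs_le (b - w)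
  rw [abs_le]
  rcases hv with ⟨hv1, hv2⟩ | ⟨hv1, hv2⟩ <;> constructor <;> linarith

lemma shift_tendsto_left {T : ℝ} {x y G : ℝ → ℝ} (hG : Continuous G)
    (hyx : ∀ t ∈ Set.Icc (0:ℝ) T, y t = x t + G t) {t L : ℝ} (ht : t ∈ Set.Ioc (0:ℝ) T)
    (hL : Tendsto x (nhdsWithin t (Set.Iio t)) (nhds L)) :
    Tendsto y (nhdsWithin t (Set.Iio t)) (nhds (L + G t)) := by
  have hev : ∀ᶠ s in nhdsWithin t (Set.Iio t), y s = x s + G s := by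
    filter_upwards [Ioo_mem_nhdsLT ht.1] with s hs
    exact hyx s ⟨hs.1.le, hs.2.le.trans ht.2⟩
  exact Tendsto.congr' (hev.mono fun s hs => hs.symm)
    (hL.add ((hG.tendsto t).mono_left nhdsWithin_le_nhds))

lemma shift_leftL {T : ℝ} {x y G : ℝ → ℝ} (hx : IsCadlagOn T x) (hG : Continuous G)
    (hyx : ∀ t ∈ Set.Icc (0:ℝ) T, y t = x t + G t) {t : ℝ} (ht : t ∈ Set.Icc (0:ℝ) T) :
    leftL y t = leftL x t + G t := by
  rcases eq_or_lt_of_le ht.1 with h0 | h0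
  · rw [leftL, leftL, if_pos h0.symm, if_pos h0.symm, ← h0]
    exact hyx 0 (Set.left_mem_Icc.2 (ht.1.trans ht.2))
  · have htI : t ∈ Set.Ioc (0:ℝ) T := ⟨h0, ht.2⟩
    have hxl := cadlag_leftL_tendsto hx htI
    exact leftL_eq (ne_of_gt h0) (shift_tendsto_left hG hyx htI hxl)

lemma cadlag_shift {T : ℝ} {x y G : ℝ → ℝ} (hx : IsCadlagOn T x) (hG : Continuous G)
    (hyx : ∀ t ∈ Set.Icc (0:ℝ) T, y t = x t + G t) : IsCadlagOn T y := by
  constructor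
  · intro t ht
    have hev : ∀ᶠ s in nhdsWithin t (Set.Ici t), y s = x s + G s := by
      filter_upwards [Ico_mem_nhdsGE ht.2] with s hs
      exact hyx s ⟨ht.1.trans hs.1, hs.2.le⟩
    have h1 := (hx.1 t ht).add ((hG.tendsto t).mono_left nhdsWithin_le_nhds)
    rw [hyx t ⟨ht.1, ht.2.le⟩]
    exact Tendsto.congr' (hev.mono fun s hs => hs.symm) h1
  · intro t ht
    obtain ⟨L, hL⟩ := hx.2 t ht
    exact ⟨L + G t, shift_tendsto_left hG hyx ht hL⟩

lemma paramRep_mapsto {T : ℝ} {x u r : ℝ → ℝ} (hu : IsParamRep T x u r) :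
    ∀ s ∈ Set.Icc (0:ℝ) 1, r s ∈ Set.Icc (0:ℝ) T := by
  intro s hs
  constructor
  · rw [← hu.2.2.2.1]
    exact hu.2.2.1 (Set.left_mem_Icc.2 zero_le_one) hs hs.1
  · rw [← hu.2.2.2.2.1]
    exact hu.2.2.1 hs (Set.right_mem_Icc.2 zero_le_one) hs.2

lemma paramRep_shift {T : ℝ} {x y G u r : ℝ → ℝ} (hx : IsCadlagOn T x) (hG : Continuous G)
    (hyx : ∀ t ∈ Set.Icc (0:ℝ) T, y t = x t + G t) (hu : IsParamRep T x u r) :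
    IsParamRep T y (fun s => u s + G (r s)) r := by
  have hrT := paramRep_mapsto hu
  obtain ⟨huc, hrc, hrm, hr0, hr1, hseg, hsurj, hord⟩ := hu
  refine ⟨huc.add (hG.comp_continuousOn hrc), hrc, hrm, hr0, hr1, ?_, ?_, ?_⟩
  · intro s hs
    rw [shift_leftL hx hG hyx (hrT s hs), hyx (r s) (hrT s hs)]
    exact (seg_translate (γ := G (r s))).1 (hseg s hs)
  · intro t ht v hv
    rw [shift_leftL hx hG hyx ht, hyx t ht] at hv
    have hv' : v - G t ∈ segment ℝ (leftL x t) (x t) := by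
      have := (seg_translate (a := leftL x t) (b := x t) (v := v - G t) (γ := G t)).2
      simp only [sub_add_cancel] at this
      exact this hv
    obtain ⟨s, hs, hrs, hus⟩ := hsurj t ht (v - G t) hv'
    exact ⟨s, hs, hrs, by show u s + G (r s) = v; rw [hus, hrs]; ring⟩
  · intro s₁ hs₁ s₂ hs₂ hle heq
    rw [shift_leftL hx hG hyx (hrT s₁ hs₁), hyx (r s₁) (hrT s₁ hs₁)]
    have h1 : u s₂ + G (r s₂) - (u s₁ + G (r s₁)) = u s₂ - u s₁ := by rw [← heq]; ring
    have h2 : x (r s₁) + G (r s₁) - (leftL x (r s₁) + G (r s₁)) = x (r s₁) - leftL x (r s₁) := by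
      ring
    rw [h1, h2]
    exact hord s₁ hs₁ s₂ hs₂ hle heq

lemma countable_jumps {T : ℝ} {x : ℝ → ℝ} (hx : IsCadlagOn T x) :
    {t : ℝ | t ∈ Set.Ioo 0 T ∧ x t ≠ leftL x t}.Countable := by
  have hfin : ∀ k : ℕ, {t : ℝ | t ∈ Set.Ioo 0 T ∧ 1/(k+1:ℝ) < |x t - leftL x t|}.Finite := by
    intro k
    set ε : ℝ := 1/(k+1:ℝ) with hεdef
    have hε : 0 < ε := by positivity
    by_contra hinf
    have hinf' : {t : ℝ | t ∈ Set.Ioo 0 T ∧ ε < |x t - leftL x t|}.Infinite := hinf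
    set S := {t : ℝ | t ∈ Set.Ioo 0 T ∧ ε < |x t - leftL x t|} with hSdef
    have emb := hinf'.natEmbedding
    set a : ℕ → ℝ := fun j => (emb j).1 with hadef
    have hainj : Function.Injective a := fun i j hij =>
      emb.injective (Subtype.val_injective hij)
    have haS : ∀ j, a j ∈ S := fun j => (emb j).2
    have haIcc : ∀ j, a j ∈ Set.Icc (0:ℝ) T := fun j =>
      ⟨(haS j).1.1.le, (haS j).1.2.le⟩
    obtain ⟨tstar, htstar, ψ, hψmono, hψtend⟩ := isCompact_Icc.tendsto_subseq haIcc
    set b : ℕ → ℝ := a ∘ ψ with hbdef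
    have hbinj : Function.Injective b := hainj.comp hψmono.injective
    have hbS : ∀ j, b j ∈ S := fun j => haS (ψ j)
    have hbne : ∃ᶠ j in atTop, b j ≠ tstar := by
      rw [Filter.frequently_atTop]
      intro N
      by_contra hcon
      push_neg at hcon
      have h1 : b N = tstar := hcon N le_rfl
      have h2 : b (N+1) = tstar := hcon (N+1) (Nat.le_succ N)
      exact Nat.succ_ne_self N (hbinj (h2.trans h1.symm))
    have hside : (∃ᶠ j in atTop, b j < tstar) ∨ (∃ᶠ j in atTop, tstar < b j) := by
      by_contra hcon
      push_neg at hcon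
      obtain ⟨h1, h2⟩ := hcon
      have hev : ∀ᶠ j in atTop, b j = tstar := by
        filter_upwards [h1, h2] with j hj1 hj2
        exact le_antisymm hj2 hj1
      exact (hbne.and_eventually hev).exists.elim fun _ h => absurd h.2 h.1
    set η : ℝ := ε/4 with hηdef
    have hη : 0 < η := by positivity
    rcases hside with hleft | hright
    · obtain ⟨j₀, hj₀⟩ := hleft.exists
      have htpos : 0 < tstar := lt_trans (hbS j₀).1.1 hj₀
      obtain ⟨L, hL⟩ := hx.2 tstar ⟨htpos, htstar.2⟩
      have hev : ∀ᶠ s in nhdsWithin tstar (Set.Iio tstar), |x s - L| < η := by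
        have hh := Metric.tendsto_nhds.1 hL η hη
        filter_upwards [hh] with s hs
        rwa [Real.dist_eq] at hs
      obtain ⟨l, hl, hsub⟩ := mem_nhdsLT_iff_exists_Ioo_subset.1 hev
      have hev2 : ∀ᶠ j in atTop, |b j - tstar| < tstar - l := by
        have hh := Metric.tendsto_nhds.1 hψtend (tstar - l) (by simpa using hl)
        filter_upwards [hh] with j hj
        rwa [Real.dist_eq] at hj
      obtain ⟨j, hj1, hj2⟩ := (hleft.and_eventually hev2).exists
      set t₀ := b j with ht₀def
      have ht₀ : t₀ ∈ Set.Ioo l tstar := by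
        constructor
        · have hlt := abs_lt.1 hj2
          linarith [hlt.1, hlt.2]
        · exact hj1
      have hxt₀ : |x t₀ - L| < η := hsub ht₀
      have hLL : Tendsto x (nhdsWithin t₀ (Set.Iio t₀)) (nhds (leftL x t₀)) :=
        cadlag_leftL_tendsto hx ⟨(hbS j).1.1, (hbS j).1.2.le⟩
      have hlb : |leftL x t₀ - L| ≤ η := by
        apply le_of_tendsto (hLL.sub_const L).abs
        filter_upwards [Ioo_mem_nhdsLT (show l < t₀ from ht₀.1)] with s hs
        exact (hsub ⟨hs.1, hs.2.trans ht₀.2⟩).le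
      have hjmp : ε < |x t₀ - leftL x t₀| := (hbS j).2
      have habs : |x t₀ - leftL x t₀| ≤ |x t₀ - L| + |leftL x t₀ - L| := by
        calc |x t₀ - leftL x t₀| = |(x t₀ - L) - (leftL x t₀ - L)| := by ring_nf
        _ ≤ |x t₀ - L| + |leftL x t₀ - L| := abs_sub _ _
      linarith [hxt₀, hlb]
    · obtain ⟨j₀, hj₀⟩ := hright.exists
      have htlt : tstar < T := lt_of_lt_of_le hj₀ (hbS j₀).1.2.le
      have hrc := hx.1 tstar ⟨htstar.1, htlt⟩
      have hev : ∀ᶠ s in nhdsWithin tstar (Set.Ici tstar), |x s - x tstar| < η := by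
        have hh := Metric.tendsto_nhds.1 hrc η hη
        filter_upwards [hh] with s hs
        rwa [Real.dist_eq] at hs
      obtain ⟨u, hu, hsub⟩ := mem_nhdsGE_iff_exists_Ico_subset.1 hev
      have hev2 : ∀ᶠ j in atTop, |b j - tstar| < u - tstar := by
        have hh := Metric.tendsto_nhds.1 hψtend (u - tstar) (by simpa using hu)
        filter_upwards [hh] with j hj
        rwa [Real.dist_eq] at hj
      obtain ⟨j, hj1, hj2⟩ := (hright.and_eventually hev2).exists
      set t₀ := b j with ht₀def
      have ht₀ : t₀ ∈ Set.Ico tstar u := by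
        refine ⟨hj1.le, ?_⟩
        have hlt := abs_lt.1 hj2
        linarith [hlt.1, hlt.2]
      have hxt₀ : |x t₀ - x tstar| < η := hsub ht₀
      have hLL : Tendsto x (nhdsWithin t₀ (Set.Iio t₀)) (nhds (leftL x t₀)) :=
        cadlag_leftL_tendsto hx ⟨(hbS j).1.1, (hbS j).1.2.le⟩
      have hlb : |leftL x t₀ - x tstar| ≤ η := by
        apply le_of_tendsto (hLL.sub_const (x tstar)).abs
        filter_upwards [Ioo_mem_nhdsLT (show tstar < t₀ from hj1)] with s hs
        exact (hsub ⟨hs.1.le, hs.2.trans_le ht₀.2.le⟩).le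
      have hjmp : ε < |x t₀ - leftL x t₀| := (hbS j).2
      have habs : |x t₀ - leftL x t₀| ≤ |x t₀ - x tstar| + |leftL x t₀ - x tstar| := by
        calc |x t₀ - leftL x t₀| = |(x t₀ - x tstar) - (leftL x t₀ - x tstar)| := by ring_nf
        _ ≤ |x t₀ - x tstar| + |leftL x t₀ - x tstar| := abs_sub _ _
      linarith [hxt₀, hlb]
    
  have hsub : {t : ℝ | t ∈ Set.Ioo 0 T ∧ x t ≠ leftL x t} ⊆
      ⋃ k : ℕ, {t : ℝ | t ∈ Set.Ioo 0 T ∧ 1/(k+1:ℝ) < |x t - leftL x t|} := by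
    intro t ⟨ht, hne⟩
    have hpos : 0 < |x t - leftL x t| := abs_pos.2 (sub_ne_zero.2 hne)
    obtain ⟨k, hk⟩ := exists_nat_one_div_lt hpos
    exact Set.mem_iUnion.2 ⟨k, ht, by exact_mod_cast hk⟩
  exact Set.Countable.mono hsub (Set.countable_iUnion fun k => (hfin k).countable)

lemma my_gronwall {T : ℝ} (hT : 0 < T) {φ : ℝ → ℝ} (hφ : ContinuousOn φ (Set.Icc 0 T))
    {a b : ℝ} (ha : 0 ≤ a) (hb : 0 ≤ b)
    (hineq : ∀ t ∈ Set.Icc (0:ℝ) T, φ t ≤ a + b * ∫ s in (0:ℝ)..t, φ s) :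
    ∀ t ∈ Set.Icc (0:ℝ) T, φ t ≤ a * Real.exp (b * T) := by
  obtain ⟨t₀, ht₀, hmax⟩ := isCompact_Icc.exists_isMaxOn (Set.nonempty_Icc.2 hT.le) hφ
  set Φ := φ t₀ with hΦdef
  have hΦ : ∀ t ∈ Set.Icc (0:ℝ) T, φ t ≤ Φ := fun t ht => hmax ht
  have hc1 : ∀ m : ℕ, Continuous (fun s : ℝ => (b*s)^m / m.factorial) := fun m =>
    ((continuous_const.mul continuous_id).pow m).div_const _
  have fact_ne : ∀ j : ℕ, ((j.factorial : ℝ)) ≠ 0 := fun j => by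
    exact_mod_cast j.factorial_ne_zero
  have key : ∀ k : ℕ, ∀ t ∈ Set.Icc (0:ℝ) T,
      φ t ≤ a * (∑ j ∈ Finset.range k, (b*t)^j / j.factorial) + Φ * ((b*t)^k / k.factorial) := by
    intro k
    induction k with
    | zero => intro t ht; simpa using hΦ t ht
    | succ k ih =>
      intro t ht
      have hint_φ : IntervalIntegrable φ volume 0 t := by
        apply ContinuousOn.intervalIntegrable
        rw [Set.uIcc_of_le ht.1]
        exact hφ.mono (Set.Icc_subset_Icc le_rfl ht.2)
      have hcontP : Continuous (fun s : ℝ =>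
          a * (∑ j ∈ Finset.range k, (b*s)^j / j.factorial) + Φ * ((b*s)^k / k.factorial)) :=
        (continuous_const.mul (continuous_finset_sum _ fun j _ => hc1 j)).add
          (continuous_const.mul (hc1 k))
      have hmono : (∫ s in (0:ℝ)..t, φ s) ≤ ∫ s in (0:ℝ)..t,
          (a * (∑ j ∈ Finset.range k, (b*s)^j / j.factorial) + Φ * ((b*s)^k / k.factorial)) := by
        apply intervalIntegral.integral_mono_on ht.1 hint_φ (hcontP.intervalIntegrable 0 t)
        intro s hs
        exact ih s ⟨hs.1, hs.2.trans ht.2⟩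
      have hcalc : ∀ j : ℕ, (∫ s in (0:ℝ)..t, (b*s)^j / j.factorial)
          = (b^j / j.factorial) * (t^(j+1) / (j+1)) := by
        intro j
        have heq : (fun s : ℝ => (b*s)^j / j.factorial)
            = fun s : ℝ => (b^j / j.factorial) * s^j := by
          funext s; rw [mul_pow]; ring
        rw [heq, intervalIntegral.integral_const_mul, integral_pow]
        ring
      have hintegral : (∫ s in (0:ℝ)..t,
          (a * (∑ j ∈ Finset.range k, (b*s)^j / j.factorial) + Φ * ((b*s)^k / k.factorial)))
          = a * (∑ j ∈ Finset.range k, (b^j / j.factorial) * (t^(j+1)/(j+1)))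
            + Φ * ((b^k / k.factorial) * (t^(k+1)/(k+1))) := by
        have h1 : IntervalIntegrable (fun s : ℝ =>
            a * (∑ j ∈ Finset.range k, (b*s)^j / j.factorial)) volume 0 t :=
          ((continuous_const.mul (continuous_finset_sum _ fun j _ => hc1 j))).intervalIntegrable 0 t
        have h2 : IntervalIntegrable (fun s : ℝ => Φ * ((b*s)^k / k.factorial)) volume 0 t :=
          (continuous_const.mul (hc1 k)).intervalIntegrable 0 t
        rw [intervalIntegral.integral_add h1 h2, intervalIntegral.integral_const_mul,
          intervalIntegral.integral_const_mul]
        congr 1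
        · congr 1
          rw [intervalIntegral.integral_finset_sum]
          · exact Finset.sum_congr rfl fun j _ => hcalc j
          · intro j _
            exact (hc1 j).intervalIntegrable 0 t
        · rw [hcalc k]
      have chain : φ t ≤ a + b * (a * (∑ j ∈ Finset.range k, (b^j / j.factorial) * (t^(j+1)/(j+1)))
            + Φ * ((b^k / k.factorial) * (t^(k+1)/(k+1)))) := by
        rw [← hintegral]
        have hstep := hineq t ht
        nlinarith [hmono]
      refine chain.trans (le_of_eq ?_)
      have term_eq : ∀ j : ℕ, b * ((b^j / j.factorial) * (t^(j+1)/(j+1)))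
          = (b*t)^(j+1) / ((j+1).factorial : ℝ) := by
        intro j
        rw [Nat.factorial_succ, mul_pow]
        have hj := fact_ne j
        have hj1 : ((j:ℝ) + 1) ≠ 0 := by positivity
        push_cast
        field_simp
        ring
      have e1 : b * (∑ j ∈ Finset.range k, (b^j / j.factorial) * (t^(j+1)/(j+1)))
          = ∑ j ∈ Finset.range k, (b*t)^(j+1) / ((j+1).factorial : ℝ) := by
        rw [Finset.mul_sum]
        exact Finset.sum_congr rfl fun j _ => term_eq j
      have e2 := term_eq k
      rw [Finset.sum_range_succ' (fun j => (b*t)^j / (j.factorial : ℝ)) k]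
      simp only [pow_zero, Nat.factorial_zero, Nat.cast_one, div_one]
      linear_combination a * e1 + Φ * e2
  intro t ht
  have hbt : 0 ≤ b * t := mul_nonneg hb ht.1
  have hlim : Tendsto (fun k : ℕ => a * Real.exp (b*T) + Φ * ((b*t)^k / k.factorial)) atTop
      (nhds (a * Real.exp (b*T))) := by
    have h0 := (FloorSemiring.tendsto_pow_div_factorial_atTop (b*t)).const_mul Φ
    simpa using tendsto_const_nhds.add h0
  refine ge_of_tendsto hlim (Filter.Eventually.of_forall fun k => ?_)
  have h1 := key k t ht
  have h2 : (∑ j ∈ Finset.range k, (b*t)^j / (j.factorial:ℝ)) ≤ Real.exp (b*T) :=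
    (Real.sum_le_exp_of_nonneg hbt k).trans (Real.exp_le_exp.2 (by nlinarith [ht.2]))
  nlinarith [h1, h2]

lemma unif_nonneg (f : ℝ → ℝ) : 0 ≤ unif f :=
  Real.iSup_nonneg fun s => abs_nonneg _

lemma dM1_nonneg (T : ℝ) (x y : ℝ → ℝ) : 0 ≤ dM1 T x y := by
  apply Real.sInf_nonneg
  rintro d ⟨ux, rx, uy, ry, _, _, rfl⟩
  exact le_max_of_le_left (unif_nonneg _)

lemma le_unif {f : ℝ → ℝ} (hf : ContinuousOn f (Set.Icc 0 1)) {s : ℝ}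
    (hs : s ∈ Set.Icc (0:ℝ) 1) : |f s| ≤ unif f := by
  have hb : BddAbove (Set.range fun p : Set.Icc (0:ℝ) 1 => |f p.1|) := by
    have hc := (isCompact_Icc.image_of_continuousOn hf.abs).bddAbove
    rwa [Set.image_eq_range] at hc
  exact le_ciSup hb (⟨s, hs⟩ : Set.Icc (0:ℝ) 1)

lemma unif_le {f : ℝ → ℝ} {K : ℝ} (hK : 0 ≤ K) (hf : ∀ s ∈ Set.Icc (0:ℝ) 1, |f s| ≤ K) :
    unif f ≤ K :=
  Real.iSup_le (fun s => hf s.1 s.2) hK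
set_option maxHeartbeats 2000000 in
/-- Theorem 1.1: the integral representation map is continuous on `D([0,T],ℝ)`
in the `M₁` topology. -/
theorem m1_continuity_of_integral_representation
    (T : ℝ) (hT : 0 < T) (c : ℝ) (h : ℝ → ℝ)
    (hLip : ∀ w₁ w₂ : ℝ, |h w₁ - h w₂| ≤ c * |w₁ - w₂|)
    (x : ℕ → ℝ → ℝ) (x₀ : ℝ → ℝ) (y : ℕ → ℝ → ℝ) (y₀ : ℝ → ℝ)
    (hxc : ∀ n, IsCadlagOn T (x n)) (hx₀c : IsCadlagOn T x₀)
    (hyb : ∀ n, BddMeasOn T (y n)) (hy₀b : BddMeasOn T y₀)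
    (hy : ∀ n, ∀ t ∈ Set.Icc (0:ℝ) T, y n t = x n t + ∫ s in (0:ℝ)..t, h (y n s))
    (hy₀ : ∀ t ∈ Set.Icc (0:ℝ) T, y₀ t = x₀ t + ∫ s in (0:ℝ)..t, h (y₀ s))
    (hconv : Filter.Tendsto (fun n => dM1 T (x n) x₀) Filter.atTop (nhds 0)) :
    Filter.Tendsto (fun n => dM1 T (y n) y₀) Filter.atTop (nhds 0) := by
  classical
  -- c is nonnegative, h is continuous
  have hc0 : 0 ≤ c := by
    have h1 := hLip 0 1
    have h2 := abs_nonneg (h 0 - h 1)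
    simp only [zero_sub, abs_neg, abs_one, mul_one] at h1
    linarith
  have hhcont : Continuous h := by
    have hl : LipschitzWith c.toNNReal h := by
      apply LipschitzWith.of_dist_le_mul
      intro a b
      rw [Real.dist_eq, Real.dist_eq, Real.coe_toNNReal c hc0]
      exact hLip a b
    exact hl.continuous
  have habs_h : ∀ w : ℝ, |h w| ≤ |h 0| + c * |w| := by
    intro w
    have h1 := hLip w 0
    have h2 : |h w| ≤ |h w - h 0| + |h 0| := by
      calc |h w| = |(h w - h 0) + h 0| := by ring_nf
      _ ≤ |h w - h 0| + |h 0| := abs_add_le _ _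
    simp only [sub_zero] at h1
    linarith
  -- measurable bounded extensions of y n and y₀
  choose z Mz hzm hMz hzeq hzbd using fun n => exists_ext (hyb n).1 (hyb n).2
  obtain ⟨z₀, Mz₀, hz₀m, hMz₀, hz₀eq, hz₀bd⟩ := exists_ext hy₀b.1 hy₀b.2
  -- the integrands and primitives
  set F : ℕ → ℝ → ℝ := fun n s => h (z n s) with hFdef
  set F₀ : ℝ → ℝ := fun s => h (z₀ s) with hF₀def
  have hFm : ∀ n, Measurable (F n) := fun n => hhcont.measurable.comp (hzm n)
  have hF₀m : Measurable F₀ := hhcont.measurable.comp hz₀m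
  have hFbd : ∀ n s, |F n s| ≤ |h 0| + c * Mz n := by
    intro n s
    have := habs_h (z n s)
    have h2 := hzbd n s
    nlinarith
  have hF₀bd : ∀ s, |F₀ s| ≤ |h 0| + c * Mz₀ := by
    intro s
    have := habs_h (z₀ s)
    have h2 := hz₀bd s
    nlinarith
  set g : ℕ → ℝ → ℝ := fun n t => ∫ s in (0:ℝ)..t, F n s with hgdef
  set g₀ : ℝ → ℝ := fun t => ∫ s in (0:ℝ)..t, F₀ s with hg₀def
  have hgcont : ∀ n, Continuous (g n) := fun n => primitive_cont (hFm n) (hFbd n)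
  have hg₀cont : Continuous g₀ := primitive_cont hF₀m hF₀bd
  -- the integral equations in terms of g
  have hyg : ∀ n, ∀ t ∈ Set.Icc (0:ℝ) T, y n t = x n t + g n t := by
    intro n t ht
    rw [hy n t ht]
    congr 1
    apply intervalIntegral.integral_congr
    intro s hs
    rw [Set.uIcc_of_le ht.1] at hs
    exact (congrArg h (hzeq n s ⟨hs.1, hs.2.trans ht.2⟩)).symm
  have hy₀g : ∀ t ∈ Set.Icc (0:ℝ) T, y₀ t = x₀ t + g₀ t := by
    intro t ht
    rw [hy₀ t ht]
    congr 1
    apply intervalIntegral.integral_congr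
    intro s hs
    rw [Set.uIcc_of_le ht.1] at hs
    exact (congrArg h (hz₀eq s ⟨hs.1, hs.2.trans ht.2⟩)).symm
  -- measurable versions of x n, x₀
  set X : ℕ → ℝ → ℝ := fun n t => z n t - g n t with hXdef
  set X₀ : ℝ → ℝ := fun t => z₀ t - g₀ t with hX₀def
  have hXm : ∀ n, Measurable (X n) := fun n => (hzm n).sub (hgcont n).measurable
  have hX₀m : Measurable X₀ := hz₀m.sub hg₀cont.measurable
  have hXeq : ∀ n, ∀ t ∈ Set.Icc (0:ℝ) T, X n t = x n t := by
    intro n t ht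
    show z n t - g n t = x n t
    rw [hzeq n t ht, hyg n t ht]
    ring
  have hX₀eq : ∀ t ∈ Set.Icc (0:ℝ) T, X₀ t = x₀ t := by
    intro t ht
    show z₀ t - g₀ t = x₀ t
    rw [hz₀eq t ht, hy₀g t ht]
    ring
  -- L¹ distances
  set I : ℕ → ℝ := fun n => ∫ t in (0:ℝ)..T, |X n t - X₀ t| with hIdef
  have hXsubint : ∀ n a b, IntervalIntegrable (fun t => |X n t - X₀ t|) volume a b := by
    intro n a b
    have h1 : IntervalIntegrable (z n) volume a b := bddMeas_intInt (hzm n) (hzbd n) a b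
    have h2 : IntervalIntegrable z₀ volume a b := bddMeas_intInt hz₀m hz₀bd a b
    have h3 : IntervalIntegrable (fun t => g n t - g₀ t) volume a b :=
      ((hgcont n).sub hg₀cont).intervalIntegrable a b
    have h4 : IntervalIntegrable (fun t => X n t - X₀ t) volume a b := by
      have := (h1.sub h2).sub h3
      apply this.congr
      intro t _
      show z n t - z₀ t - (g n t - g₀ t) = X n t - X₀ t
      simp only [hXdef, hX₀def]
      ring
    exact h4.abs
  have hInonneg : ∀ n, 0 ≤ I n := fun n =>
    intervalIntegral.integral_nonneg hT.le fun t _ => abs_nonneg _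
  -- global bound on x₀ and its left limits
  set B₀f : ℝ := |h 0| + c * Mz₀ with hB₀fdef
  have hB₀f : 0 ≤ B₀f := by positivity
  set M : ℝ := Mz₀ + B₀f * T with hMdef
  have hM0 : 0 ≤ M := by positivity
  have hg₀b : ∀ t ∈ Set.Icc (0:ℝ) T, |g₀ t| ≤ B₀f * T := by
    intro t ht
    have h1 := primitive_lip hF₀m hF₀bd 0 t
    simp only [intervalIntegral.integral_same, sub_zero] at h1
    calc |g₀ t| ≤ B₀f * |t| := h1
    _ ≤ B₀f * T := by
        rw [abs_of_nonneg ht.1]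
        exact mul_le_mul_of_nonneg_left ht.2 hB₀f
  have hMx : ∀ t ∈ Set.Icc (0:ℝ) T, |x₀ t| ≤ M := by
    intro t ht
    have h1 : x₀ t = y₀ t - g₀ t := by rw [hy₀g t ht]; ring
    rw [h1, ← hz₀eq t ht]
    calc |z₀ t - g₀ t| ≤ |z₀ t| + |g₀ t| := abs_sub _ _
    _ ≤ Mz₀ + B₀f * T := add_le_add (hz₀bd t) (hg₀b t ht)
  have hMl : ∀ t ∈ Set.Icc (0:ℝ) T, |leftL x₀ t| ≤ M := by
    intro t ht
    rcases eq_or_lt_of_le ht.1 with h0 | h0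
    · rw [leftL, if_pos h0.symm]
      exact hMx 0 (Set.left_mem_Icc.2 (ht.1.trans ht.2))
    · have hll := cadlag_leftL_tendsto hx₀c ⟨h0, ht.2⟩
      apply le_of_tendsto hll.abs
      filter_upwards [Ioo_mem_nhdsLT h0] with s hs
      exact hMx s ⟨hs.1.le, hs.2.le.trans ht.2⟩
  have hMseg : ∀ t' ∈ Set.Icc (0:ℝ) T, ∀ v ∈ segment ℝ (leftL x₀ t') (x₀ t'), |v| ≤ M := by
    intro t' ht' v hv
    have h1 := seg_dist_bound (w := 0) hv
    simp only [sub_zero] at h1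
    exact h1.trans (max_le (hMl t' ht') (hMx t' ht'))
  -- a countable dense family in [0, T]
  obtain ⟨q, hq⟩ := exists_surjective_nat ℚ
  set d : ℕ → ℝ := fun i => if i = 0 then T else if i = 1 then 0
    else min T (max 0 ((q (i-2) : ℝ))) with hddef
  have hdIcc : ∀ i, d i ∈ Set.Icc (0:ℝ) T := by
    intro i
    simp only [hddef]
    split
    · exact ⟨hT.le, le_rfl⟩
    · split
      · exact ⟨le_rfl, hT.le⟩
      · exact ⟨le_min hT.le (le_max_left 0 _), min_le_left _ _⟩
  have hd0 : d 0 = T := by simp [hddef]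
  have hd1 : d 1 = 0 := by simp [hddef]
  have hdense : ∀ a b : ℝ, 0 ≤ a → b ≤ T → a < b → ∃ i, a < d i ∧ d i < b := by
    intro a b ha hb hab
    obtain ⟨ρ, hρ1, hρ2⟩ := exists_rat_btwn hab
    obtain ⟨m, rfl⟩ := hq ρ
    refine ⟨m + 2, ?_⟩
    have hd2 : d (m + 2) = ((q m : ℝ)) := by
      simp only [hddef]
      rw [if_neg (by omega), if_neg (by omega)]
      have e1 : m + 2 - 2 = m := by omega
      rw [e1, max_eq_right (le_of_lt (lt_of_le_of_lt ha hρ1)),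
        min_eq_right (hρ2.le.trans hb)]
    rw [hd2]
    exact ⟨hρ1, hρ2⟩
  -- bad set is countable
  have hJc := countable_jumps hx₀c
  -- the oscillation majorant
  set V : ℕ → ℝ → ENNReal := fun k t => ⨆ i, if |d i - t| ≤ 2/(k+1:ℝ)
    then ENNReal.ofReal |X₀ (d i) - X₀ t| else 0 with hVdef
  have hVmeas : ∀ k, Measurable (V k) := by
    intro k
    apply Measurable.iSup
    intro i
    apply Measurable.ite
    · exact (isClosed_le ((continuous_const.sub continuous_id).abs) continuous_const).measurableSet
    · exact ((measurable_const.sub hX₀m).abs).ennreal_ofReal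
    · exact measurable_const
  have hVbd : ∀ k, ∀ t ∈ Set.Icc (0:ℝ) T, V k t ≤ ENNReal.ofReal (2*M) := by
    intro k t ht
    apply iSup_le
    intro i
    split
    · apply ENNReal.ofReal_le_ofReal
      rw [hX₀eq (d i) (hdIcc i), hX₀eq t ht]
      calc |x₀ (d i) - x₀ t| ≤ |x₀ (d i)| + |x₀ t| := abs_sub _ _
      _ ≤ 2*M := by linarith [hMx (d i) (hdIcc i), hMx t ht]
    · exact zero_le
  -- goodness: at continuity points the oscillation vanishes
  have hgood : ∀ t ∈ Set.Ioo (0:ℝ) T, x₀ t = leftL x₀ t → ∀ η : ℝ, 0 < η →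
      ∃ δ₀ > 0, ∀ t'' ∈ Set.Icc (0:ℝ) T, |t'' - t| < δ₀ → |x₀ t'' - x₀ t| ≤ η := by
    intro t ht heq η hη
    have hrc := hx₀c.1 t ⟨ht.1.le, ht.2⟩
    have hevr : ∀ᶠ s in nhdsWithin t (Set.Ici t), |x₀ s - x₀ t| < η := by
      have hh := Metric.tendsto_nhds.1 hrc η hη
      filter_upwards [hh] with s hs
      rwa [Real.dist_eq] at hs
    obtain ⟨w, hw, hsubw⟩ := mem_nhdsGE_iff_exists_Ico_subset.1 hevr
    have hll := cadlag_leftL_tendsto hx₀c ⟨ht.1, ht.2.le⟩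
    rw [← heq] at hll
    have hevl : ∀ᶠ s in nhdsWithin t (Set.Iio t), |x₀ s - x₀ t| < η := by
      have hh := Metric.tendsto_nhds.1 hll η hη
      filter_upwards [hh] with s hs
      rwa [Real.dist_eq] at hs
    obtain ⟨l, hl, hsubl⟩ := mem_nhdsLT_iff_exists_Ioo_subset.1 hevl
    have hw' : t < w := Set.mem_Ioi.1 hw
    have hl' : l < t := Set.mem_Iio.1 hl
    refine ⟨min (w - t) (t - l), lt_min (sub_pos.2 hw') (sub_pos.2 hl'), ?_⟩
    intro t'' ht'' habs
    rcases lt_or_ge t'' t with hlt | hge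
    · have h1 : l < t'' := by
        have := abs_lt.1 habs
        have h2 := this.1
        have h3 : -(t - l) ≤ -(min (w - t) (t - l)) := neg_le_neg (min_le_right _ _)
        linarith
      exact (hsubl ⟨h1, hlt⟩).le
    · have h1 : t'' < w := by
        have := abs_lt.1 habs
        have h2 := this.2
        have h3 := min_le_left (w - t) (t - l)
        linarith
      exact (hsubw ⟨hge, h1⟩).le
  have hVtend : ∀ t ∈ Set.Ioo (0:ℝ) T, x₀ t = leftL x₀ t →
      Filter.Tendsto (fun k => V k t) Filter.atTop (nhds 0) := by
    intro t ht heq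
    rw [ENNReal.tendsto_atTop_zero]
    intro ε hε
    obtain ⟨η, hη0, hηε⟩ : ∃ η : ℝ, 0 < η ∧ ENNReal.ofReal η ≤ ε := by
      rcases le_or_gt 1 ε with hc1 | hc1
      · exact ⟨1, one_pos, by simpa using hc1⟩
      · have hεtop : ε ≠ ⊤ := (hc1.trans (by norm_num)).ne
        refine ⟨ε.toReal, ?_, by rw [ENNReal.ofReal_toReal hεtop]⟩
        exact ENNReal.toReal_pos hε.ne' hεtop
    obtain ⟨δ₀, hδ₀, hosc⟩ := hgood t ht heq η hη0
    obtain ⟨N, hN⟩ := exists_nat_gt (2/δ₀)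
    refine ⟨N, fun k hk => ?_⟩
    have hkd : 2/(k+1:ℝ) < δ₀ := by
      have h1 : (N:ℝ) ≤ k + 1 := by
        have : (N:ℝ) ≤ k := Nat.cast_le.2 hk
        linarith
      have h2 : 2/δ₀ < (k+1:ℝ) := lt_of_lt_of_le hN h1
      rw [div_lt_iff₀ (by positivity)]
      rw [div_lt_iff₀ hδ₀] at h2
      linarith [h2]
    refine le_trans (iSup_le fun i => ?_) hηε
    split
    · rename_i hcond
      apply ENNReal.ofReal_le_ofReal
      rw [hX₀eq (d i) (hdIcc i), hX₀eq t ⟨ht.1.le, ht.2.le⟩]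
      exact hosc (d i) (hdIcc i) (lt_of_le_of_lt hcond hkd)
    · exact zero_le
  -- L¹ convergence of the majorant
  have hIocfin : volume (Set.Ioc (0:ℝ) T) ≠ ⊤ := by
    rw [Real.volume_Ioc]
    exact ENNReal.ofReal_ne_top
  have hVintbd : ∀ k, (∫⁻ t in Set.Ioc (0:ℝ) T, V k t) ≤ ENNReal.ofReal (2*M) * volume (Set.Ioc (0:ℝ) T) := by
    intro k
    calc (∫⁻ t in Set.Ioc (0:ℝ) T, V k t)
        ≤ ∫⁻ _ in Set.Ioc (0:ℝ) T, ENNReal.ofReal (2*M) := by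
          apply MeasureTheory.lintegral_mono_ae
          filter_upwards [MeasureTheory.ae_restrict_mem measurableSet_Ioc] with t ht
          exact hVbd k t ⟨ht.1.le, ht.2⟩
    _ = ENNReal.ofReal (2*M) * volume (Set.Ioc (0:ℝ) T) := by
          rw [MeasureTheory.lintegral_const, MeasureTheory.Measure.restrict_apply_univ]
  have hVintfin : ∀ k, (∫⁻ t in Set.Ioc (0:ℝ) T, V k t) ≠ ⊤ := fun k =>
    (lt_of_le_of_lt (hVintbd k) (ENNReal.mul_lt_top ENNReal.ofReal_lt_top
      (lt_top_iff_ne_top.2 hIocfin))).ne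
  have hVlim : Filter.Tendsto (fun k => ∫⁻ t in Set.Ioc (0:ℝ) T, V k t) Filter.atTop (nhds 0) := by
    have hdc := MeasureTheory.tendsto_lintegral_of_dominated_convergence
      (μ := volume.restrict (Set.Ioc (0:ℝ) T)) (F := V) (f := fun _ => 0)
      (fun _ => ENNReal.ofReal (2*M)) hVmeas ?_ ?_ ?_
    · simpa using hdc
    · intro k
      filter_upwards [MeasureTheory.ae_restrict_mem measurableSet_Ioc] with t ht
      exact hVbd k t ⟨ht.1.le, ht.2⟩
    · rw [MeasureTheory.lintegral_const, MeasureTheory.Measure.restrict_apply_univ]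
      exact (ENNReal.mul_lt_top ENNReal.ofReal_lt_top (lt_top_iff_ne_top.2 hIocfin)).ne
    · -- a.e. convergence
      have hnull : volume ({t : ℝ | t ∈ Set.Ioo 0 T ∧ x₀ t ≠ leftL x₀ t} ∪ {T}) = 0 :=
        measure_union_null (hJc.measure_zero _) (measure_singleton T)
      have h1 : ∀ᵐ t ∂(volume.restrict (Set.Ioc (0:ℝ) T)),
          t ∉ ({t : ℝ | t ∈ Set.Ioo 0 T ∧ x₀ t ≠ leftL x₀ t} ∪ {T}) := by
        exact MeasureTheory.ae_restrict_of_ae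
          (MeasureTheory.measure_eq_zero_iff_ae_notMem.1 hnull)
      filter_upwards [h1, MeasureTheory.ae_restrict_mem measurableSet_Ioc] with t htJ htIoc
      rcases eq_or_lt_of_le htIoc.2 with hTeq | hTlt
      · exact absurd (Set.mem_union_right _ (by simp [hTeq])) htJ
      · have htIoo : t ∈ Set.Ioo (0:ℝ) T := ⟨htIoc.1, hTlt⟩
        have hne : x₀ t = leftL x₀ t := by
          by_contra hcon
          exact htJ (Set.mem_union_left _ ⟨htIoo, hcon⟩)
        exact hVtend t htIoo hne
  set LV : ℕ → ℝ := fun k => (∫⁻ t in Set.Ioc (0:ℝ) T, V k t).toReal with hLVdef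
  have hLV0 : ∀ k, 0 ≤ LV k := fun k => ENNReal.toReal_nonneg
  have hLVtend : Filter.Tendsto LV Filter.atTop (nhds 0) := by
    have hco : Filter.Tendsto ENNReal.toReal (nhds 0) (nhds 0) := by
      simpa using (ENNReal.tendsto_toReal (a := 0) (by simp))
    exact hco.comp hVlim
  -- uniform constants
  set A : ℝ := M + 1 + |h 0| * T with hAdef
  have hA0 : 0 ≤ A := by positivity
  set M' : ℝ := A + c * (A * T * Real.exp (c*T)) with hM'def
  have hM'0 : 0 ≤ M' := by positivity
  set B : ℝ := |h 0| + c * M' with hBdef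
  have hB0 : 0 ≤ B := by positivity
  -- the main estimate, given good parametric representations
  have main_est : ∀ (k n : ℕ) (uN rN u₀ r₀ : ℝ → ℝ),
      IsParamRep T (x n) uN rN → IsParamRep T x₀ u₀ r₀ →
      (∀ s ∈ Set.Icc (0:ℝ) 1, |uN s - u₀ s| ≤ 1/(k+1:ℝ)) →
      (∀ s ∈ Set.Icc (0:ℝ) 1, |rN s - r₀ s| ≤ 1/(k+1:ℝ)) →
      dM1 T (y n) y₀ ≤ (1/(k+1:ℝ)) * (1 + B)
        + (c * (T * (1/(k+1:ℝ)) + LV k)) * Real.exp (c*T) := by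
    intro k n uN rN u₀ r₀ hrepN hrep₀ hud hrd
    set δ : ℝ := 1/(k+1:ℝ) with hδdef
    have hδpos : 0 < δ := by positivity
    have hδ1 : δ ≤ 1 := by
      rw [hδdef, div_le_one (by positivity)]
      have : (0:ℝ) ≤ k := Nat.cast_nonneg k
      linarith
    -- uniform bound on x n
    have hxnb : ∀ t ∈ Set.Icc (0:ℝ) T, |x n t| ≤ M + 1 := by
      intro t ht
      obtain ⟨s, hs, hrs, hus⟩ := hrepN.2.2.2.2.2.2.1 t ht (x n t)
        (right_mem_segment ℝ _ _)
      have h1 : |u₀ s| ≤ M := hMseg (r₀ s) (paramRep_mapsto hrep₀ s hs)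
        (u₀ s) (hrep₀.2.2.2.2.2.1 s hs)
      rw [← hus]
      calc |uN s| = |(uN s - u₀ s) + u₀ s| := by ring_nf
      _ ≤ |uN s - u₀ s| + |u₀ s| := abs_add_le _ _
      _ ≤ δ + M := add_le_add (hud s hs) h1
      _ ≤ M + 1 := by linarith
    -- uniform bound on y n  (Gronwall)
    have hznb : ∀ t ∈ Set.Icc (0:ℝ) T, |z n t| ≤ M' := by
      have hzabs : Measurable fun t => |z n t| := (hzm n).abs
      have hzabsb : ∀ t, abs (abs (z n t)) ≤ Mz n := fun t => by
        rw [abs_abs]; exact hzbd n t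
      set ψ : ℝ → ℝ := fun t => ∫ s in (0:ℝ)..t, |z n s| with hψdef
      have hψcont : Continuous ψ := primitive_cont hzabs hzabsb
      have hψnn : ∀ t ∈ Set.Icc (0:ℝ) T, 0 ≤ ψ t := fun t ht =>
        intervalIntegral.integral_nonneg ht.1 fun s _ => abs_nonneg _
      have hgnb : ∀ s_1 ∈ Set.Icc (0:ℝ) T, |g n s_1| ≤ |h 0| * T + c * ψ s_1 := by
        intro s hsI
        have h1 : |g n s| ≤ ∫ w in (0:ℝ)..s, |F n w| :=
          intervalIntegral.abs_integral_le_integral_abs hsI.1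
        have h2 : (∫ w in (0:ℝ)..s, |F n w|) ≤ ∫ w in (0:ℝ)..s, (|h 0| + c * |z n w|) := by
          apply intervalIntegral.integral_mono_on hsI.1
          · exact (bddMeas_intInt (hFm n) (hFbd n) 0 s).abs
          · exact ((intervalIntegrable_const).add
              ((bddMeas_intInt hzabs hzabsb 0 s).const_mul c))
          · intro w _
            exact habs_h (z n w)
        have h3 : (∫ w in (0:ℝ)..s, (|h 0| + c * |z n w|)) = |h 0| * s + c * ψ s := by
          rw [intervalIntegral.integral_add intervalIntegrable_const
            ((bddMeas_intInt hzabs hzabsb 0 s).const_mul c),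
            intervalIntegral.integral_const, intervalIntegral.integral_const_mul]
          simp [mul_comm, hψdef]
        have h4 : |h 0| * s ≤ |h 0| * T := mul_le_mul_of_nonneg_left hsI.2 (abs_nonneg _)
        linarith
      have hψineq : ∀ t ∈ Set.Icc (0:ℝ) T, ψ t ≤ A*T + c * ∫ s in (0:ℝ)..t, ψ s := by
        intro t ht
        have h1 : ψ t ≤ ∫ s in (0:ℝ)..t, (A + c * ψ s) := by
          apply intervalIntegral.integral_mono_on ht.1
            (bddMeas_intInt hzabs hzabsb 0 t)
            ((intervalIntegrable_const).add
              ((hψcont.intervalIntegrable 0 t).const_mul c))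
          intro s hsI
          have hsT : s ∈ Set.Icc (0:ℝ) T := ⟨hsI.1, hsI.2.trans ht.2⟩
          have h2 : |z n s| = |y n s| := by rw [hzeq n s hsT]
          have h3 : |y n s| ≤ |x n s| + |g n s| := by
            rw [hyg n s hsT]; exact abs_add_le _ _
          have h4 := hxnb s hsT
          have h5 := hgnb s hsT
          rw [h2]
          calc |y n s| ≤ (M+1) + (|h 0| * T + c * ψ s) := by linarith
          _ = A + c * ψ s := by rw [hAdef]; ring
        have h6 : (∫ s in (0:ℝ)..t, (A + c * ψ s)) = A * t + c * ∫ s in (0:ℝ)..t, ψ s := by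
          rw [intervalIntegral.integral_add intervalIntegrable_const
            ((hψcont.intervalIntegrable 0 t).const_mul c),
            intervalIntegral.integral_const, intervalIntegral.integral_const_mul]
          simp [mul_comm]
        have h7 : A * t ≤ A * T := mul_le_mul_of_nonneg_left ht.2 hA0
        linarith
      have hψb := my_gronwall hT hψcont.continuousOn
        (by positivity) hc0 hψineq
      intro t ht
      have h2 : |z n t| = |y n t| := by rw [hzeq n t ht]
      have h3 : |y n t| ≤ |x n t| + |g n t| := by
        rw [hyg n t ht]; exact abs_add_le _ _
      have h4 := hxnb t ht
      have h5 := hgnb t ht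
      have h6 := hψb t ht
      have h7 : 0 ≤ c * ψ t := mul_nonneg hc0 (hψnn t ht)
      rw [h2, hM'def, hAdef]
      have h8 : c * ψ t ≤ c * (A*T*Real.exp (c*T)) := mul_le_mul_of_nonneg_left h6 hc0
      rw [hAdef] at h8
      calc |y n t| ≤ (M+1) + (|h 0| * T + c * ψ t) := by linarith
      _ ≤ _ := by nlinarith
    -- Lipschitz bound for g n on [0, T]
    have hgnlip : ∀ a ∈ Set.Icc (0:ℝ) T, ∀ b ∈ Set.Icc (0:ℝ) T,
        |g n a - g n b| ≤ B * |a - b| := by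
      intro a ha b hb
      have h1 : g n a - g n b = ∫ s in b..a, F n s :=
        intervalIntegral.integral_interval_sub_left
          (bddMeas_intInt (hFm n) (hFbd n) 0 a) (bddMeas_intInt (hFm n) (hFbd n) 0 b)
      rw [h1]
      have h2 : ∀ s ∈ Set.uIoc b a, |F n s| ≤ B := by
        intro s hs
        have hsT : s ∈ Set.Icc (0:ℝ) T := by
          rcases Set.mem_uIoc.1 hs with ⟨h3, h4⟩ | ⟨h3, h4⟩
          · exact ⟨hb.1.trans h3.le, h4.trans ha.2⟩
          · exact ⟨ha.1.trans h3.le, h4.trans hb.2⟩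
        have h5 := habs_h (z n s)
        have h6 := hznb s hsT
        rw [hBdef]
        nlinarith
      simpa using intervalIntegral.norm_integral_le_of_norm_le_const
        (f := F n) (a := b) (b := a) (C := B) (fun s hs => by simpa using h2 s hs)
    -- key pointwise estimate
    have hptA : ∀ t ∈ Set.Icc (0:ℝ) T,
        ENNReal.ofReal |X n t - X₀ t| ≤ ENNReal.ofReal δ + V k t := by
      intro t ht
      obtain ⟨s, hs, hrs, hus⟩ := hrepN.2.2.2.2.2.2.1 t ht (x n t)
        (right_mem_segment ℝ _ _)
      have ht'I : r₀ s ∈ Set.Icc (0:ℝ) T := paramRep_mapsto hrep₀ s hs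
      have htt' : |r₀ s - t| ≤ δ := by
        rw [← hrs, abs_sub_comm]
        exact hrd s hs
      have hu₀seg := hrep₀.2.2.2.2.2.1 s hs
      have hVfin : V k t ≠ ⊤ :=
        (lt_of_le_of_lt (hVbd k t ht) ENNReal.ofReal_lt_top).ne
      set RV : ℝ := (V k t).toReal with hRVdef
      have hRV0 : 0 ≤ RV := ENNReal.toReal_nonneg
      have h2δ : 2/(k+1:ℝ) = 2*δ := by rw [hδdef]; ring
      have hkey : ∀ i, |d i - t| ≤ 2*δ → |x₀ (d i) - x₀ t| ≤ RV := by
        intro i hi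
        have h1 : ENNReal.ofReal |X₀ (d i) - X₀ t| ≤ V k t := by
          have h2 := le_iSup (fun i => if |d i - t| ≤ 2/(k+1:ℝ)
            then ENNReal.ofReal |X₀ (d i) - X₀ t| else 0) i
          rwa [if_pos (by rw [h2δ]; exact hi)] at h2
        have h3 : |X₀ (d i) - X₀ t| ≤ RV := by
          rw [hRVdef, ← ENNReal.ofReal_le_iff_le_toReal hVfin]
          exact h1
        rwa [hX₀eq (d i) (hdIcc i), hX₀eq t ht] at h3
      have hbr : |x₀ (r₀ s) - x₀ t| ≤ RV := by
        rcases eq_or_lt_of_le ht'I.2 with hT' | hT'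
        · have e : d 0 = r₀ s := by rw [hd0, ← hT']
          rw [← e]
          apply hkey 0
          rw [e]
          calc |r₀ s - t| ≤ δ := htt'
          _ ≤ 2*δ := by linarith
        · refine le_of_forall_pos_le_add fun η hη => ?_
          have hrc := hx₀c.1 (r₀ s) ⟨ht'I.1, hT'⟩
          have hev : ∀ᶠ s' in nhdsWithin (r₀ s) (Set.Ici (r₀ s)), |x₀ s' - x₀ (r₀ s)| < η := by
            have hh := Metric.tendsto_nhds.1 hrc η hη
            filter_upwards [hh] with s' hs'
            rwa [Real.dist_eq] at hs'
          obtain ⟨w, hw, hsubw⟩ := mem_nhdsGE_iff_exists_Ico_subset.1 hev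
          have hw' : r₀ s < w := Set.mem_Ioi.1 hw
          obtain ⟨i, hi1, hi2⟩ := hdense (r₀ s) (min w (min (r₀ s + δ) T)) ht'I.1
            (le_trans (min_le_right _ _) (min_le_right _ _))
            (lt_min hw' (lt_min (by linarith) hT'))
          have hdiw : d i < w := lt_of_lt_of_le hi2 (min_le_left _ _)
          have hdiδ : d i < r₀ s + δ :=
            lt_of_lt_of_le hi2 (le_trans (min_le_right _ _) (min_le_left _ _))
          have hdi : |x₀ (d i) - x₀ (r₀ s)| < η := hsubw ⟨hi1.le, hdiw⟩
          have h2d : |d i - t| ≤ 2*δ := by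
            have ha1 := abs_le.1 htt'
            rw [abs_le]
            constructor <;> linarith [ha1.1, ha1.2]
          calc |x₀ (r₀ s) - x₀ t| ≤ |x₀ (r₀ s) - x₀ (d i)| + |x₀ (d i) - x₀ t| :=
            abs_sub_le _ _ _
          _ ≤ η + RV := add_le_add (by rw [abs_sub_comm]; exact hdi.le) (hkey i h2d)
          _ = RV + η := by ring
      have hbl : |leftL x₀ (r₀ s) - x₀ t| ≤ RV := by
        rcases eq_or_lt_of_le ht'I.1 with h0' | h0'
        · have hL0 : leftL x₀ (r₀ s) = x₀ 0 := by
            rw [← h0', leftL, if_pos rfl]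
          rw [hL0]
          have := hkey 1
          rw [hd1] at this
          apply this
          have ha1 := abs_le.1 htt'
          rw [abs_le]
          constructor <;> [linarith [ht.2, hT.le]; skip]
          · have h6 : t ≤ r₀ s + δ := by linarith [ha1.1]
            rw [← h0'] at h6
            linarith
        · refine le_of_forall_pos_le_add fun η hη => ?_
          have hll := cadlag_leftL_tendsto hx₀c ⟨h0', ht'I.2⟩
          have hev : ∀ᶠ s' in nhdsWithin (r₀ s) (Set.Iio (r₀ s)),
              |x₀ s' - leftL x₀ (r₀ s)| < η/2 := by
            have hh := Metric.tendsto_nhds.1 hll (η/2) (by positivity)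
            filter_upwards [hh] with s' hs'
            rwa [Real.dist_eq] at hs'
          obtain ⟨l, hl, hsubl⟩ := mem_nhdsLT_iff_exists_Ioo_subset.1 hev
          have hl' : l < r₀ s := Set.mem_Iio.1 hl
          set s₁ : ℝ := (max l (max (r₀ s - δ) 0) + r₀ s)/2 with hs₁def
          have hmaxlt : max l (max (r₀ s - δ) 0) < r₀ s :=
            max_lt hl' (max_lt (by linarith) h0')
          have hs₁lt : s₁ < r₀ s := by
            rw [hs₁def]; linarith [hmaxlt]
          have hs₁gtl : l < s₁ := by
            have := le_max_left l (max (r₀ s - δ) 0)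
            rw [hs₁def]; linarith
          have hs₁ge0 : 0 ≤ s₁ := by
            have h1 : (0:ℝ) ≤ max l (max (r₀ s - δ) 0) :=
              le_trans (le_max_right _ _) (le_max_right _ _)
            rw [hs₁def]; linarith [h0']
          have hs₁gtδ : r₀ s - δ < s₁ := by
            have h1 : r₀ s - δ ≤ max l (max (r₀ s - δ) 0) :=
              le_trans (le_max_left _ _) (le_max_right _ _)
            rw [hs₁def]; linarith
          have hs₁T : s₁ < T := lt_of_lt_of_le hs₁lt ht'I.2
          have hrc := hx₀c.1 s₁ ⟨hs₁ge0, hs₁T⟩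
          have hev2 : ∀ᶠ s' in nhdsWithin s₁ (Set.Ici s₁), |x₀ s' - x₀ s₁| < η/2 := by
            have hh := Metric.tendsto_nhds.1 hrc (η/2) (by positivity)
            filter_upwards [hh] with s' hs'
            rwa [Real.dist_eq] at hs'
          obtain ⟨w, hw, hsubw⟩ := mem_nhdsGE_iff_exists_Ico_subset.1 hev2
          have hw' : s₁ < w := Set.mem_Ioi.1 hw
          obtain ⟨i, hi1, hi2⟩ := hdense s₁ (min w (r₀ s)) hs₁ge0
            (le_trans (min_le_right _ _) ht'I.2) (lt_min hw' hs₁lt)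
          have hdiw : d i < w := lt_of_lt_of_le hi2 (min_le_left _ _)
          have hdir : d i < r₀ s := lt_of_lt_of_le hi2 (min_le_right _ _)
          have hdi1 : |x₀ (d i) - x₀ s₁| < η/2 := hsubw ⟨hi1.le, hdiw⟩
          have hdi2 : |x₀ s₁ - leftL x₀ (r₀ s)| < η/2 := hsubl ⟨hs₁gtl, hs₁lt⟩
          have h2d : |d i - t| ≤ 2*δ := by
            have ha1 := abs_le.1 htt'
            rw [abs_le]
            constructor <;> linarith [ha1.1, ha1.2]
          calc |leftL x₀ (r₀ s) - x₀ t|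
              ≤ |leftL x₀ (r₀ s) - x₀ (d i)| + |x₀ (d i) - x₀ t| := abs_sub_le _ _ _
          _ ≤ (|leftL x₀ (r₀ s) - x₀ s₁| + |x₀ s₁ - x₀ (d i)|) + |x₀ (d i) - x₀ t| := by
              have := abs_sub_le (leftL x₀ (r₀ s)) (x₀ s₁) (x₀ (d i))
              linarith
          _ ≤ (η/2 + η/2) + RV := by
              have e1 : |leftL x₀ (r₀ s) - x₀ s₁| = |x₀ s₁ - leftL x₀ (r₀ s)| :=
                abs_sub_comm _ _
              have e2 : |x₀ s₁ - x₀ (d i)| = |x₀ (d i) - x₀ s₁| := abs_sub_comm _ _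
              rw [e1, e2]
              have := hkey i h2d
              linarith [hdi1, hdi2]
          _ = RV + η := by ring
      have hfin : |x n t - x₀ t| ≤ δ + RV := by
        rw [← hus]
        calc |uN s - x₀ t| = |(uN s - u₀ s) + (u₀ s - x₀ t)| := by ring_nf
        _ ≤ |uN s - u₀ s| + |u₀ s - x₀ t| := abs_add_le _ _
        _ ≤ δ + max (|leftL x₀ (r₀ s) - x₀ t|) (|x₀ (r₀ s) - x₀ t|) :=
            add_le_add (hud s hs) (seg_dist_bound hu₀seg)
        _ ≤ δ + RV := by
            have := max_le hbl hbr
            linarith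
      have hXfin : |X n t - X₀ t| ≤ δ + RV := by
        rwa [hXeq n t ht, hX₀eq t ht]
      calc ENNReal.ofReal |X n t - X₀ t| ≤ ENNReal.ofReal (δ + RV) :=
        ENNReal.ofReal_le_ofReal hXfin
      _ = ENNReal.ofReal δ + ENNReal.ofReal RV := ENNReal.ofReal_add hδpos.le hRV0
      _ = ENNReal.ofReal δ + V k t := by rw [hRVdef, ENNReal.ofReal_toReal hVfin]
    -- bound on the L¹ distance
    have hIb : I n ≤ T * δ + LV k := by
      have e1 : I n = ∫ t in Set.Ioc (0:ℝ) T, |X n t - X₀ t| := by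
        rw [hIdef]
        exact intervalIntegral.integral_of_le hT.le
      have e2 : (∫ t in Set.Ioc (0:ℝ) T, |X n t - X₀ t|)
          = (∫⁻ t in Set.Ioc (0:ℝ) T, ENNReal.ofReal |X n t - X₀ t|).toReal := by
        apply MeasureTheory.integral_eq_lintegral_of_nonneg_ae
        · exact ae_of_all _ fun t => abs_nonneg _
        · exact (((hXm n).sub hX₀m).abs).aestronglyMeasurable.restrict
      have e3 : (∫⁻ t in Set.Ioc (0:ℝ) T, ENNReal.ofReal |X n t - X₀ t|)
          ≤ ∫⁻ t in Set.Ioc (0:ℝ) T, (ENNReal.ofReal δ + V k t) := by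
        apply MeasureTheory.lintegral_mono_ae
        filter_upwards [MeasureTheory.ae_restrict_mem measurableSet_Ioc] with t ht
        exact hptA t ⟨ht.1.le, ht.2⟩
      have e4 : (∫⁻ t in Set.Ioc (0:ℝ) T, (ENNReal.ofReal δ + V k t))
          = ENNReal.ofReal δ * ENNReal.ofReal T + ∫⁻ t in Set.Ioc (0:ℝ) T, V k t := by
        rw [MeasureTheory.lintegral_add_left measurable_const,
          MeasureTheory.lintegral_const, MeasureTheory.Measure.restrict_apply_univ,
          Real.volume_Ioc, sub_zero]
      have e5fin : ENNReal.ofReal δ * ENNReal.ofReal T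
          + (∫⁻ t in Set.Ioc (0:ℝ) T, V k t) ≠ ⊤ :=
        ENNReal.add_ne_top.2 ⟨ENNReal.mul_ne_top ENNReal.ofReal_ne_top
          ENNReal.ofReal_ne_top, hVintfin k⟩
      rw [e1, e2]
      calc (∫⁻ t in Set.Ioc (0:ℝ) T, ENNReal.ofReal |X n t - X₀ t|).toReal
          ≤ (ENNReal.ofReal δ * ENNReal.ofReal T
            + ∫⁻ t in Set.Ioc (0:ℝ) T, V k t).toReal := by
            apply ENNReal.toReal_mono e5fin
            rw [← e4]
            exact e3
      _ = δ * T + LV k := by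
            rw [ENNReal.toReal_add (ENNReal.mul_ne_top ENNReal.ofReal_ne_top
              ENNReal.ofReal_ne_top) (hVintfin k), ENNReal.toReal_mul,
              ENNReal.toReal_ofReal hδpos.le, ENNReal.toReal_ofReal hT.le]
      _ = T * δ + LV k := by ring
    -- Gronwall for φ = |g n - g₀|
    set φ : ℝ → ℝ := fun t => |g n t - g₀ t| with hφdef
    have hφcont : Continuous φ := ((hgcont n).sub hg₀cont).abs
    have hφineq : ∀ t ∈ Set.Icc (0:ℝ) T, φ t ≤ c * I n + c * ∫ s in (0:ℝ)..t, φ s := by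
      intro t ht
      have h1 : g n t - g₀ t = ∫ s in (0:ℝ)..t, (F n s - F₀ s) := by
        rw [intervalIntegral.integral_sub (bddMeas_intInt (hFm n) (hFbd n) 0 t)
          (bddMeas_intInt hF₀m hF₀bd 0 t)]
      have h2 : φ t ≤ ∫ s in (0:ℝ)..t, |F n s - F₀ s| := by
        rw [hφdef]
        show |g n t - g₀ t| ≤ _
        rw [h1]
        exact intervalIntegral.abs_integral_le_integral_abs ht.1
      have h3 : (∫ s in (0:ℝ)..t, |F n s - F₀ s|)
          ≤ ∫ s in (0:ℝ)..t, (c * |X n s - X₀ s| + c * φ s) := by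
        apply intervalIntegral.integral_mono_on ht.1
        · exact ((bddMeas_intInt (hFm n) (hFbd n) 0 t).sub
            (bddMeas_intInt hF₀m hF₀bd 0 t)).abs
        · exact ((hXsubint n 0 t).const_mul c).add
            ((hφcont.intervalIntegrable 0 t).const_mul c)
        · intro s _
          have h4 : |F n s - F₀ s| ≤ c * |z n s - z₀ s| := hLip _ _
          have h5 : |z n s - z₀ s| ≤ |X n s - X₀ s| + φ s := by
            have e : z n s - z₀ s = (X n s - X₀ s) + (g n s - g₀ s) := by
              simp only [hXdef, hX₀def]; ring
            rw [e]
            exact abs_add_le _ _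
          calc |F n s - F₀ s| ≤ c * (|X n s - X₀ s| + φ s) :=
            h4.trans (mul_le_mul_of_nonneg_left h5 hc0)
          _ = c * |X n s - X₀ s| + c * φ s := by ring
      have h6 : (∫ s in (0:ℝ)..t, (c * |X n s - X₀ s| + c * φ s))
          = c * (∫ s in (0:ℝ)..t, |X n s - X₀ s|) + c * ∫ s in (0:ℝ)..t, φ s := by
        rw [intervalIntegral.integral_add ((hXsubint n 0 t).const_mul c)
          ((hφcont.intervalIntegrable 0 t).const_mul c),
          intervalIntegral.integral_const_mul, intervalIntegral.integral_const_mul]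
      have h7 : (∫ s in (0:ℝ)..t, |X n s - X₀ s|) ≤ I n := by
        rw [hIdef]
        apply intervalIntegral.integral_mono_interval le_rfl ht.1 ht.2
          (ae_of_all _ fun s => abs_nonneg _) (hXsubint n 0 T)
      have h8 : c * (∫ s in (0:ℝ)..t, |X n s - X₀ s|) ≤ c * I n :=
        mul_le_mul_of_nonneg_left h7 hc0
      linarith
    have hφb := my_gronwall hT hφcont.continuousOn
      (mul_nonneg hc0 (hInonneg n)) hc0 hφineq
    -- build representations of y n and y₀
    have hrepyN : IsParamRep T (y n) (fun s => uN s + g n (rN s)) rN :=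
      paramRep_shift (hxc n) (hgcont n) (hyg n) hrepN
    have hrepy₀ : IsParamRep T y₀ (fun s => u₀ s + g₀ (r₀ s)) r₀ :=
      paramRep_shift hx₀c hg₀cont hy₀g hrep₀
    set dd : ℝ := max (unif fun s => (uN s + g n (rN s)) - (u₀ s + g₀ (r₀ s)))
      (unif fun s => rN s - r₀ s) with hdddef
    have hmem : dd ∈ {e : ℝ | ∃ ux rx uy ry : ℝ → ℝ, IsParamRep T (y n) ux rx ∧
        IsParamRep T y₀ uy ry ∧
        e = max (unif fun s => ux s - uy s) (unif fun s => rx s - ry s)} :=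
      ⟨_, _, _, _, hrepyN, hrepy₀, rfl⟩
    have hdM1le : dM1 T (y n) y₀ ≤ dd := by
      apply csInf_le
      · exact ⟨0, fun e he => by
          obtain ⟨_, _, _, _, _, _, rfl⟩ := he
          exact le_max_of_le_left (unif_nonneg _)⟩
      · exact hmem
    -- bound dd
    have hub : unif (fun s => (uN s + g n (rN s)) - (u₀ s + g₀ (r₀ s)))
        ≤ δ * (1 + B) + (c * I n) * Real.exp (c*T) := by
      apply unif_le
      · have h1 : 0 ≤ (c * I n) * Real.exp (c*T) :=
          mul_nonneg (mul_nonneg hc0 (hInonneg n)) (Real.exp_nonneg _)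
        nlinarith
      · intro s hs
        have hrNs := paramRep_mapsto hrepN s hs
        have hr₀s := paramRep_mapsto hrep₀ s hs
        have h1 : |(uN s + g n (rN s)) - (u₀ s + g₀ (r₀ s))|
            ≤ |uN s - u₀ s| + |g n (rN s) - g n (r₀ s)| + |g n (r₀ s) - g₀ (r₀ s)| := by
          have e : (uN s + g n (rN s)) - (u₀ s + g₀ (r₀ s))
              = (uN s - u₀ s) + ((g n (rN s) - g n (r₀ s)) + (g n (r₀ s) - g₀ (r₀ s))) := by
            ring
          rw [e]
          calc |_| ≤ |uN s - u₀ s| + |(g n (rN s) - g n (r₀ s)) + (g n (r₀ s) - g₀ (r₀ s))| :=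
            abs_add_le _ _
          _ ≤ _ := by
              have := abs_add_le (g n (rN s) - g n (r₀ s)) (g n (r₀ s) - g₀ (r₀ s))
              linarith
        have h2 : |g n (rN s) - g n (r₀ s)| ≤ B * δ := by
          calc |g n (rN s) - g n (r₀ s)| ≤ B * |rN s - r₀ s| :=
            hgnlip (rN s) hrNs (r₀ s) hr₀s
          _ ≤ B * δ := mul_le_mul_of_nonneg_left (hrd s hs) hB0
        have h3 : |g n (r₀ s) - g₀ (r₀ s)| ≤ (c * I n) * Real.exp (c*T) := hφb (r₀ s) hr₀s
        have h4 := hud s hs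
        calc |(uN s + g n (rN s)) - (u₀ s + g₀ (r₀ s))|
            ≤ δ + B * δ + (c * I n) * Real.exp (c*T) := by linarith
        _ = δ * (1 + B) + (c * I n) * Real.exp (c*T) := by ring
    have hrb : unif (fun s => rN s - r₀ s) ≤ δ := unif_le hδpos.le hrd
    have hIn' : (c * I n) * Real.exp (c*T) ≤ (c * (T * δ + LV k)) * Real.exp (c*T) := by
      apply mul_le_mul_of_nonneg_right _ (Real.exp_nonneg _)
      exact mul_le_mul_of_nonneg_left hIb hc0
    have hδval : δ ≤ δ * (1 + B) + (c * (T * δ + LV k)) * Real.exp (c*T) := by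
      have h1 : 0 ≤ (c * (T * δ + LV k)) * Real.exp (c*T) := by
        have : 0 ≤ T * δ + LV k := by positivity
        positivity
      nlinarith
    calc dM1 T (y n) y₀ ≤ dd := hdM1le
    _ ≤ δ * (1 + B) + (c * (T * δ + LV k)) * Real.exp (c*T) := by
        rw [hdddef]
        apply max_le
        · exact hub.trans (by linarith [hIn'])
        · exact hrb.trans hδval
    _ = (1/(k+1:ℝ)) * (1 + B) + (c * (T * (1/(k+1:ℝ)) + LV k)) * Real.exp (c*T) := by
        rw [hδdef]
  -- conclusion
  have hbound : ∀ ε : ℝ, 0 < ε → ∀ᶠ n in Filter.atTop, dM1 T (y n) y₀ < ε := by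
    intro ε hε
    have hval : Filter.Tendsto (fun k : ℕ => (1/(k+1:ℝ)) * (1 + B)
        + (c * (T * (1/(k+1:ℝ)) + LV k)) * Real.exp (c*T)) Filter.atTop (nhds 0) := by
      have h1 : Filter.Tendsto (fun k : ℕ => 1/(k+1:ℝ)) Filter.atTop (nhds 0) :=
        tendsto_one_div_add_atTop_nhds_zero_nat
      have h2 := h1.mul_const (1 + B)
      have h3 := ((h1.const_mul T).add hLVtend).const_mul c
      have h4 := h3.mul_const (Real.exp (c*T))
      have h5 := h2.add h4
      simpa using h5
    obtain ⟨k, hk⟩ := (hval.eventually_lt_const hε).exists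
    set δ : ℝ := 1/(k+1:ℝ) with hδdef
    have hδpos : 0 < δ := by positivity
    have hev : ∀ᶠ n in Filter.atTop, dM1 T (x n) x₀ < δ :=
      hconv.eventually_lt_const hδpos
    filter_upwards [hev] with n hn
    by_cases hSy : {e : ℝ | ∃ ux rx uy ry : ℝ → ℝ, IsParamRep T (y n) ux rx ∧
        IsParamRep T y₀ uy ry ∧
        e = max (unif fun s => ux s - uy s) (unif fun s => rx s - ry s)}.Nonempty
    · obtain ⟨e₀, uyN, ryN, uy₀, ry₀, hryN, hry₀, _⟩ := hSy
      have hxNrep : IsParamRep T (x n) (fun s => uyN s + (-(g n (ryN s)))) ryN := by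
        apply paramRep_shift (cadlag_shift (hxc n) (hgcont n) (hyg n))
          (hgcont n).neg _ hryN
        intro t ht
        rw [hyg n t ht, Pi.neg_apply]; ring
      have hx₀rep : IsParamRep T x₀ (fun s => uy₀ s + (-(g₀ (ry₀ s)))) ry₀ := by
        apply paramRep_shift (cadlag_shift hx₀c hg₀cont hy₀g) hg₀cont.neg _ hry₀
        intro t ht
        rw [hy₀g t ht, Pi.neg_apply]; ring
      have hSx : {e : ℝ | ∃ ux rx uy ry : ℝ → ℝ, IsParamRep T (x n) ux rx ∧
          IsParamRep T x₀ uy ry ∧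
          e = max (unif fun s => ux s - uy s) (unif fun s => rx s - ry s)}.Nonempty :=
        ⟨_, _, _, _, _, hxNrep, hx₀rep, rfl⟩
      have hbdd : BddBelow {e : ℝ | ∃ ux rx uy ry : ℝ → ℝ, IsParamRep T (x n) ux rx ∧
          IsParamRep T x₀ uy ry ∧
          e = max (unif fun s => ux s - uy s) (unif fun s => rx s - ry s)} :=
        ⟨0, fun e he => by
          obtain ⟨_, _, _, _, _, _, rfl⟩ := he
          exact le_max_of_le_left (unif_nonneg _)⟩
      have hlt : sInf {e : ℝ | ∃ ux rx uy ry : ℝ → ℝ, IsParamRep T (x n) ux rx ∧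
          IsParamRep T x₀ uy ry ∧
          e = max (unif fun s => ux s - uy s) (unif fun s => rx s - ry s)} < δ := hn
      obtain ⟨e₁, he₁mem, he₁lt⟩ := (csInf_lt_iff hbdd hSx).1 hlt
      obtain ⟨uN, rN, u₀, r₀, hrepN, hrep₀, rfl⟩ := he₁mem
      have hud : ∀ s ∈ Set.Icc (0:ℝ) 1, |uN s - u₀ s| ≤ δ := fun s hs =>
        le_trans (le_trans (le_unif (hrepN.1.sub hrep₀.1) hs) (le_max_left _ _)) he₁lt.le
      have hrd : ∀ s ∈ Set.Icc (0:ℝ) 1, |rN s - r₀ s| ≤ δ := fun s hs =>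
        le_trans (le_trans (le_unif (hrepN.2.1.sub hrep₀.2.1) hs) (le_max_right _ _)) he₁lt.le
      have hme := main_est k n uN rN u₀ r₀ hrepN hrep₀ hud hrd
      exact lt_of_le_of_lt hme hk
    · rw [Set.not_nonempty_iff_eq_empty] at hSy
      have he : dM1 T (y n) y₀ = 0 := by
        unfold dM1
        rw [hSy, Real.sInf_empty]
      rw [he]; exact hε
  rw [Metric.tendsto_atTop]
  intro ε hε
  obtain ⟨N, hN⟩ := Filter.eventually_atTop.1 (hbound ε hε)
  refine ⟨N, fun n hn => ?_⟩
  rw [Real.dist_eq, sub_zero, abs_of_nonneg (dM1_nonneg T (y n) y₀)]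
  exact hN n hn
end

section
/- Let T > 0, let h : ℝ → ℝ be Lipschitz with constant c, let x : [0,T] → ℝ be càdlàg, and let y : [0,T] → ℝ be a bounded Borel measurable function satisfying y(t) = x(t) + ∫₀ᵗ h(y(s)) ds for all t ∈ [0,T]. Then the function t ↦ y(t) − x(t) is Lipschitz continuous on [0,T]; consequently y is càdlàg on [0,T] and the locations and sizes of the jumps of x and y coincide: for every t ∈ (0,T], y(t) − y(t−) = x(t) − x(t−). (Lemma 3.1, jump-coincidence.) -/
open Set Filter MeasureTheory Topology

/-- Lemma 3.1 (jump coincidence): `y - x` is Lipschitz on `[0,T]`, hence `y` is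
càdlàg and the jumps of `x` and `y` coincide in location and size. -/
theorem jump_coincidence
    (T : ℝ) (hT : 0 < T) (c : ℝ) (h : ℝ → ℝ)
    (hLip : ∀ w₁ w₂ : ℝ, |h w₁ - h w₂| ≤ c * |w₁ - w₂|)
    (x y : ℝ → ℝ) (hx : IsCadlagOn T x) (hyb : BddMeasOn T y)
    (hy : ∀ t ∈ Set.Icc (0:ℝ) T, y t = x t + ∫ s in (0:ℝ)..t, h (y s)) :
    (∃ K : ℝ, 0 ≤ K ∧ ∀ t₁ ∈ Set.Icc (0:ℝ) T, ∀ t₂ ∈ Set.Icc (0:ℝ) T,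
      |(y t₁ - x t₁) - (y t₂ - x t₂)| ≤ K * |t₁ - t₂|) ∧
    IsCadlagOn T y ∧
    (∀ t ∈ Set.Ioc (0:ℝ) T, y t - leftL y t = x t - leftL x t) := by
  -- c is nonnegative
  have hc : 0 ≤ c := by
    have := hLip 0 1
    have h01 : |(0:ℝ) - 1| = 1 := by norm_num
    rw [h01, mul_one] at this
    exact le_trans (abs_nonneg _) this
  obtain ⟨⟨M, hM⟩, hmeasy⟩ := hyb
  have hM0 : 0 ≤ M := le_trans (abs_nonneg _) (hM 0 ⟨le_rfl, hT.le⟩)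
  set K : ℝ := |h 0| + c * M with hKdef
  have hK : 0 ≤ K := add_nonneg (abs_nonneg _) (mul_nonneg hc hM0)
  -- continuous h
  have hcont : Continuous h := by
    have : LipschitzWith ⟨c, hc⟩ h := by
      apply LipschitzWith.of_dist_le_mul
      intro a b
      rw [Real.dist_eq, Real.dist_eq]
      exact hLip a b
    exact this.continuous
  set g : ℝ → ℝ := (Set.Icc 0 T).indicator (fun s => h (y s)) with hgdef
  -- g is measurable
  have hmeasg : Measurable g := by
    have hF0 : Measurable (fun t : Set.Icc (0:ℝ) T => h (y t.1)) :=
      hcont.measurable.comp hmeasy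
    have hemb : MeasurableEmbedding (Subtype.val : Set.Icc (0:ℝ) T → ℝ) :=
      MeasurableEmbedding.subtype_coe measurableSet_Icc
    have hext := hemb.measurable_extend hF0 (measurable_const (a := (0:ℝ)))
    have heq : Function.extend (Subtype.val : Set.Icc (0:ℝ) T → ℝ)
        (fun t : Set.Icc (0:ℝ) T => h (y t.1)) (fun _ => 0) = g := by
      funext t
      by_cases ht : t ∈ Set.Icc (0:ℝ) T
      · have : t = Subtype.val (⟨t, ht⟩ : Set.Icc (0:ℝ) T) := rfl
        rw [this, Subtype.val_injective.extend_apply]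
        simp [hgdef, Set.indicator_of_mem ht]
      · rw [Function.extend_apply']
        · simp [hgdef, Set.indicator_of_notMem ht]
        · rintro ⟨a, rfl⟩
          exact ht a.2
    rwa [heq] at hext
  -- g is bounded by K
  have hgbdd : ∀ s : ℝ, |g s| ≤ K := by
    intro s
    by_cases hs : s ∈ Set.Icc (0:ℝ) T
    · rw [hgdef, Set.indicator_of_mem hs]
      have : |h (y s)| ≤ |h (y s) - h 0| + |h 0| := by
        have := abs_sub_abs_le_abs_sub (h (y s)) (h 0)
        linarith [abs_nonneg (h 0)]
      have h2 : |h (y s) - h 0| ≤ c * |y s - 0| := hLip (y s) 0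
      rw [sub_zero] at h2
      have h3 : c * |y s| ≤ c * M := mul_le_mul_of_nonneg_left (hM s hs) hc
      rw [hKdef]; linarith
    · rw [hgdef, Set.indicator_of_notMem hs]
      simpa using hK
  -- g is interval integrable
  have hgint : ∀ a b : ℝ, IntervalIntegrable g volume a b := by
    intro a b
    rw [intervalIntegrable_iff]
    apply MeasureTheory.Measure.integrableOn_of_bounded (M := K)
    · exact (measure_Ioc_lt_top).ne
    · exact hmeasg.aestronglyMeasurable
    · filter_upwards with s using by rw [Real.norm_eq_abs]; exact hgbdd s
  set F : ℝ → ℝ := fun t => ∫ s in (0:ℝ)..t, g s with hFdef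
  -- y = x + F on [0, T]
  have hyF : ∀ t ∈ Set.Icc (0:ℝ) T, y t = x t + F t := by
    intro t ht
    rw [hy t ht, hFdef]
    congr 1
    apply intervalIntegral.integral_congr
    intro s hs
    rw [Set.uIcc_of_le ht.1] at hs
    have hsmem : s ∈ Set.Icc (0:ℝ) T := Set.mem_Icc.mpr ⟨hs.1, le_trans hs.2 ht.2⟩
    simp only [hgdef, Set.indicator_of_mem hsmem]
  -- F is K-Lipschitz
  have hFlip : ∀ t₁ t₂ : ℝ, |F t₁ - F t₂| ≤ K * |t₁ - t₂| := by
    intro t₁ t₂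
    have heq : F t₁ - F t₂ = ∫ s in t₂..t₁, g s :=
      intervalIntegral.integral_interval_sub_left (hgint 0 t₁) (hgint 0 t₂)
    rw [heq, ← Real.norm_eq_abs]
    exact intervalIntegral.norm_integral_le_of_norm_le_const
      (fun s _ => by rw [Real.norm_eq_abs]; exact hgbdd s)
  have hFcont : Continuous F := by
    have : LipschitzWith ⟨K, hK⟩ F := by
      apply LipschitzWith.of_dist_le_mul
      intro a b
      rw [Real.dist_eq, Real.dist_eq]
      exact hFlip a b
    exact this.continuous
  -- eventual equality within left / right neighborhoods
  have hevR : ∀ t ∈ Set.Ico (0:ℝ) T, ∀ᶠ s in 𝓝[≥] t, y s = x s + F s := by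
    intro t ht
    have h1 : ∀ᶠ s in 𝓝[≥] t, s < T :=
      eventually_nhdsWithin_of_eventually_nhds (eventually_lt_nhds ht.2)
    filter_upwards [h1, self_mem_nhdsWithin] with s h1 h2
    exact hyF s ⟨le_trans ht.1 h2, h1.le⟩
  refine ⟨⟨K, hK, ?_⟩, ?_, ?_⟩
  · intro t₁ ht₁ t₂ ht₂
    rw [hyF t₁ ht₁, hyF t₂ ht₂]
    have : x t₁ + F t₁ - x t₁ - (x t₂ + F t₂ - x t₂) = F t₁ - F t₂ := by ring
    rw [show x t₁ + F t₁ - x t₁ - (x t₂ + F t₂ - x t₂) = F t₁ - F t₂ from by ring]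
    exact hFlip t₁ t₂
  · constructor
    · intro t ht
      have hxr := hx.1 t ht
      have hFt : Filter.Tendsto F (𝓝[≥] t) (𝓝 (F t)) :=
        (hFcont.continuousAt).continuousWithinAt
      have htend : Filter.Tendsto (fun s => x s + F s) (𝓝[≥] t) (𝓝 (x t + F t)) :=
        hxr.add hFt
      rw [hyF t ⟨ht.1, ht.2.le⟩]
      apply htend.congr'
      exact (hevR t ht).mono fun s h => h.symm
    · intro t ht
      obtain ⟨L, hL⟩ := hx.2 t ht
      refine ⟨L + F t, ?_⟩
      have hFt : Filter.Tendsto F (𝓝[<] t) (𝓝 (F t)) :=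
        (hFcont.continuousAt).continuousWithinAt
      have htend : Filter.Tendsto (fun s => x s + F s) (𝓝[<] t) (𝓝 (L + F t)) :=
        hL.add hFt
      apply htend.congr'
      have h1 : ∀ᶠ s in 𝓝[<] t, (0:ℝ) < s :=
        eventually_nhdsWithin_of_eventually_nhds (eventually_gt_nhds ht.1)
      filter_upwards [h1, self_mem_nhdsWithin] with s h1 h2
      exact (hyF s ⟨h1.le, le_trans (le_of_lt h2) ht.2⟩).symm
  · intro t ht
    obtain ⟨L, hL⟩ := hx.2 t ht
    have hne : 𝓝[<] t ≠ ⊥ := (nhdsLT_neBot t).ne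
    have hxL : Function.leftLim x t = L := leftLim_eq_of_tendsto hL
    have hFt : Filter.Tendsto F (𝓝[<] t) (𝓝 (F t)) :=
      (hFcont.continuousAt).continuousWithinAt
    have hyL : Function.leftLim y t = L + F t := by
      apply leftLim_eq_of_tendsto
      have htend : Filter.Tendsto (fun s => x s + F s) (𝓝[<] t) (𝓝 (L + F t)) :=
        hL.add hFt
      apply htend.congr'
      have h1 : ∀ᶠ s in 𝓝[<] t, (0:ℝ) < s :=
        eventually_nhdsWithin_of_eventually_nhds (eventually_gt_nhds ht.1)
      filter_upwards [h1, self_mem_nhdsWithin] with s h1 h2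
      exact (hyF s ⟨h1.le, le_trans (le_of_lt h2) ht.2⟩).symm
    have htne : t ≠ 0 := ne_of_gt ht.1
    rw [leftL, leftL, if_neg htne, if_neg htne, hxL, hyL,
      hyF t ⟨ht.1.le, ht.2⟩]
    ring
end

section
/- Let T > 0 and let x and x_n (n ∈ ℕ) be càdlàg functions on [0,T]. Suppose there exist parametric representations (u, r) ∈ Π(x) and (u_n, r_n) ∈ Π(x_n) such that max(‖u_n − u‖, ‖r_n − r‖) → 0 as n → ∞ (i.e., x_n → x in M₁). Then limsup_{n→∞} J_max(x_n) ≤ J_max(x). (Lemma 4.1.) -/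
open Set Filter MeasureTheory Topology

/-- Lemma 4.1: if `xₙ → x` in `(D, M₁)` then `limsup J_max(xₙ) ≤ J_max(x)`. -/
theorem limsup_jmax_le
    (T : ℝ) (hT : 0 < T)
    (x : ℕ → ℝ → ℝ) (x₀ : ℝ → ℝ)
    (hxc : ∀ n, IsCadlagOn T (x n)) (hx₀c : IsCadlagOn T x₀)
    (u0 r0 : ℝ → ℝ) (un rn : ℕ → ℝ → ℝ)
    (h0 : IsParamRep T x₀ u0 r0) (hn : ∀ n, IsParamRep T (x n) (un n) (rn n))
    (hconv : Filter.Tendsto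
      (fun n => max (unif fun s => un n s - u0 s) (unif fun s => rn n s - r0 s))
      Filter.atTop (nhds 0)) :
    Filter.limsup (fun n => Jmax T (x n)) Filter.atTop ≤ Jmax T x₀ := by
  
  classical
  obtain ⟨hu0, hr0, hr0m, hr00, hr01, hseg0, hsurj0, -⟩ := h0
  have h0mem : (0:ℝ) ∈ Set.Icc (0:ℝ) 1 := ⟨le_refl _, zero_le_one⟩
  have h1mem : (1:ℝ) ∈ Set.Icc (0:ℝ) 1 := ⟨zero_le_one, le_refl _⟩
  -- clamp function
  set c : ℝ → ℝ := fun s => max 0 (min 1 s) with hc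
  have hc_mem : ∀ s, c s ∈ Set.Icc (0:ℝ) 1 :=
    fun s => ⟨le_max_left _ _, max_le zero_le_one (min_le_left _ _)⟩
  have hc_eq : ∀ s ∈ Set.Icc (0:ℝ) 1, c s = s := by
    intro s hs
    simp only [hc, min_eq_right hs.2, max_eq_right hs.1]
  have hc_cont : Continuous c := continuous_const.max (continuous_const.min continuous_id)
  set U : ℝ → ℝ := fun s => u0 (c s) with hUdef
  set R : ℝ → ℝ := fun s => r0 (c s) with hRdef
  have hU : Continuous U := hu0.comp_continuous hc_cont hc_mem
  have hR : Continuous R := hr0.comp_continuous hc_cont hc_mem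
  have hUe : ∀ s ∈ Set.Icc (0:ℝ) 1, U s = u0 s := fun s hs => by
    simp only [hUdef, hc_eq s hs]
  have hRe : ∀ s ∈ Set.Icc (0:ℝ) 1, R s = r0 s := fun s hs => by
    simp only [hRdef, hc_eq s hs]
  -- boundedness of u0 and of jumps of x₀
  obtain ⟨M, hM⟩ := isCompact_Icc.exists_bound_of_continuousOn hu0
  have hjump_bdd : ∀ t ∈ Set.Icc (0:ℝ) T, |x₀ t - leftL x₀ t| ≤ 2 * M := by
    intro t ht
    obtain ⟨s₂, hs₂, -, hu₂⟩ := hsurj0 t ht (x₀ t) (right_mem_segment ℝ _ _)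
    obtain ⟨s₁, hs₁, -, hu₁⟩ := hsurj0 t ht (leftL x₀ t) (left_mem_segment ℝ _ _)
    have b2 := hM s₂ hs₂
    have b1 := hM s₁ hs₁
    rw [Real.norm_eq_abs] at b1 b2
    calc |x₀ t - leftL x₀ t| = |u0 s₂ - u0 s₁| := by rw [hu₁, hu₂]
      _ ≤ |u0 s₂| + |u0 s₁| := abs_sub _ _
      _ ≤ 2 * M := by linarith
  have hbddJ : BddAbove (Set.range fun t : Set.Icc (0:ℝ) T => |x₀ t.1 - leftL x₀ t.1|) := by
    refine ⟨2 * M, ?_⟩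
    rintro v ⟨t, rfl⟩
    exact hjump_bdd t.1 t.2
  have hle_J : ∀ t ∈ Set.Icc (0:ℝ) T, |x₀ t - leftL x₀ t| ≤ Jmax T x₀ := by
    intro t ht
    exact le_ciSup hbddJ (⟨t, ht⟩ : Set.Icc (0:ℝ) T)
  -- r0 maps into [0, T]
  have hr0T : ∀ a ∈ Set.Icc (0:ℝ) 1, r0 a ∈ Set.Icc (0:ℝ) T := by
    intro a ha
    constructor
    · rw [← hr00]; exact hr0m h0mem ha ha.1
    · rw [← hr01]; exact hr0m ha h1mem ha.2
  -- A1 : if r0 a = r0 b then |u0 b - u0 a| ≤ Jmax T x₀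
  have hA1 : ∀ a ∈ Set.Icc (0:ℝ) 1, ∀ b ∈ Set.Icc (0:ℝ) 1, r0 a = r0 b →
      |u0 b - u0 a| ≤ Jmax T x₀ := by
    intro a ha b hb hab
    have htmem := hr0T a ha
    have h1 := hseg0 a ha
    have h2 := hseg0 b hb
    rw [← hab] at h2
    set p := leftL x₀ (r0 a) with hp
    set q := x₀ (r0 a) with hq
    rw [segment_eq_uIcc, Set.uIcc, Set.mem_Icc] at h1 h2
    have hminmax : p ⊔ q - p ⊓ q = |q - p| := by
      rcases le_total p q with hpq | hpq
      · rw [inf_eq_left.2 hpq, sup_eq_right.2 hpq, abs_of_nonneg (sub_nonneg.2 hpq)]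
      · rw [inf_eq_right.2 hpq, sup_eq_left.2 hpq, abs_of_nonpos (sub_nonpos.2 hpq)]
        ring
    have key : |u0 b - u0 a| ≤ |q - p| := by
      rw [abs_sub_le_iff]
      exact ⟨by linarith [h1.1, h1.2, h2.1, h2.2, hminmax],
        by linarith [h1.1, h1.2, h2.1, h2.2, hminmax]⟩
    calc |u0 b - u0 a| ≤ |q - p| := key
      _ ≤ Jmax T x₀ := hle_J (r0 a) htmem
  -- A : uniform version via compactness
  have hA : ∀ δ : ℝ, 0 < δ → ∃ ε : ℝ, 0 < ε ∧ ∀ a ∈ Set.Icc (0:ℝ) 1, ∀ b ∈ Set.Icc (0:ℝ) 1,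
      a ≤ b → r0 b - r0 a ≤ ε → |u0 b - u0 a| ≤ Jmax T x₀ + δ := by
    intro δ hδ
    set K : Set (ℝ × ℝ) := (Set.Icc (0:ℝ) 1 ×ˢ Set.Icc (0:ℝ) 1) ∩ {p | p.1 ≤ p.2} with hK
    have hKc : IsCompact K :=
      (isCompact_Icc.prod isCompact_Icc).inter_right (isClosed_le continuous_fst continuous_snd)
    set g : ℝ × ℝ → ℝ := fun p => |U p.2 - U p.1| with hgdef
    set h : ℝ × ℝ → ℝ := fun p => R p.2 - R p.1 with hhdef
    have hg : Continuous g := ((hU.comp continuous_snd).sub (hU.comp continuous_fst)).abs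
    have hh : Continuous h := (hR.comp continuous_snd).sub (hR.comp continuous_fst)
    set K' : Set (ℝ × ℝ) := K ∩ {p | Jmax T x₀ + δ ≤ g p} with hK'
    have hK'c : IsCompact K' := hKc.inter_right (isClosed_le continuous_const hg)
    by_cases hne : K'.Nonempty
    · obtain ⟨p₀, hp₀, hmin⟩ := hK'c.exists_isMinOn hne hh.continuousOn
      obtain ⟨⟨⟨hp₀1, hp₀2⟩, hp₀le⟩, hgp₀⟩ := hp₀
      have hp₀le : p₀.1 ≤ p₀.2 := hp₀le
      have hgp₀ : Jmax T x₀ + δ ≤ g p₀ := hgp₀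
      have hh_eq : h p₀ = r0 p₀.2 - r0 p₀.1 := by
        simp only [hhdef, hRe p₀.1 hp₀1, hRe p₀.2 hp₀2]
      have hg_eq : g p₀ = |u0 p₀.2 - u0 p₀.1| := by
        simp only [hgdef, hUe p₀.1 hp₀1, hUe p₀.2 hp₀2]
      have hp₀pos : 0 < h p₀ := by
        rcases lt_or_ge 0 (h p₀) with h' | h'
        · exact h'
        · exfalso
          have hge : r0 p₀.1 ≤ r0 p₀.2 := hr0m hp₀1 hp₀2 hp₀le
          have heq : r0 p₀.1 = r0 p₀.2 := by
            rw [hh_eq] at h'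
            exact le_antisymm hge (by linarith)
          have hcon := hA1 p₀.1 hp₀1 p₀.2 hp₀2 heq
          rw [hg_eq] at hgp₀
          linarith
      refine ⟨h p₀ / 2, half_pos hp₀pos, ?_⟩
      intro a ha b hb hab hr
      by_contra hgt
      push_neg at hgt
      have hmem : ((a, b) : ℝ × ℝ) ∈ K' := by
        refine ⟨⟨⟨ha, hb⟩, hab⟩, ?_⟩
        show Jmax T x₀ + δ ≤ g (a, b)
        have hgab : g (a, b) = |u0 b - u0 a| := by simp only [hgdef, hUe a ha, hUe b hb]
        rw [hgab]
        linarith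
      have h1 : h p₀ ≤ h (a, b) := isMinOn_iff.1 hmin (a, b) hmem
      have h2 : h (a, b) = r0 b - r0 a := by simp only [hhdef, hRe a ha, hRe b hb]
      rw [h2, hh_eq] at h1
      rw [hh_eq] at hr hp₀pos
      linarith
    · refine ⟨1, one_pos, ?_⟩
      intro a ha b hb hab hr
      by_contra hgt
      push_neg at hgt
      refine hne ⟨(a, b), ⟨⟨ha, hb⟩, hab⟩, ?_⟩
      show Jmax T x₀ + δ ≤ g (a, b)
      have hgab : g (a, b) = |u0 b - u0 a| := by simp only [hgdef, hUe a ha, hUe b hb]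
      rw [hgab]
      linarith
  -- pointwise bound by the uniform norm
  have habs_le_unif : ∀ f : ℝ → ℝ, ContinuousOn f (Set.Icc 0 1) →
      ∀ s ∈ Set.Icc (0:ℝ) 1, |f s| ≤ unif f := by
    intro f hf s hs
    have hbdd : BddAbove (Set.range fun s : Set.Icc (0:ℝ) 1 => |f s.1|) := by
      obtain ⟨C, hC⟩ := isCompact_Icc.exists_bound_of_continuousOn hf
      refine ⟨C, ?_⟩
      rintro v ⟨t, rfl⟩
      simpa [Real.norm_eq_abs] using hC t.1 t.2
    exact le_ciSup hbdd (⟨s, hs⟩ : Set.Icc (0:ℝ) 1)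
  -- Jmax of each x n is nonnegative
  have hJnonneg : ∀ n, 0 ≤ Jmax T (x n) := by
    intro n
    exact Real.iSup_nonneg fun t => abs_nonneg _
  -- the main eventual bound
  have hB : ∀ δ : ℝ, 0 < δ → ∀ᶠ n in Filter.atTop, Jmax T (x n) ≤ Jmax T x₀ + δ := by
    intro δ hδ
    obtain ⟨ε, hε, hεA⟩ := hA (δ / 2) (by linarith)
    set m := min (ε / 2) (δ / 8) with hm
    have hmpos : 0 < m := lt_min (by linarith) (by linarith)
    filter_upwards [hconv.eventually_lt_const hmpos] with n hnlt
    obtain ⟨hunc, hrnc, -, -, -, hsegn, hsurjn, -⟩ := hn n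
    have hdu : ∀ s ∈ Set.Icc (0:ℝ) 1, |un n s - u0 s| ≤ m := by
      intro s hs
      exact le_trans (habs_le_unif (fun s => un n s - u0 s) (hunc.sub hu0) s hs)
        (le_trans (le_max_left _ _) hnlt.le)
    have hdr : ∀ s ∈ Set.Icc (0:ℝ) 1, |rn n s - r0 s| ≤ m := by
      intro s hs
      exact le_trans (habs_le_unif (fun s => rn n s - r0 s) (hrnc.sub hr0) s hs)
        (le_trans (le_max_right _ _) hnlt.le)
    -- bound each jump of x n
    have hptw : ∀ t ∈ Set.Icc (0:ℝ) T, |x n t - leftL (x n) t| ≤ Jmax T x₀ + δ := by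
      intro t ht
      obtain ⟨s₂, hs₂, hrs₂, hu₂⟩ := hsurjn t ht (x n t) (right_mem_segment ℝ _ _)
      obtain ⟨s₁, hs₁, hrs₁, hu₁⟩ := hsurjn t ht (leftL (x n) t) (left_mem_segment ℝ _ _)
      obtain ⟨a, b, ha, hb, hle, hrab, habs⟩ :
          ∃ a b, a ∈ Set.Icc (0:ℝ) 1 ∧ b ∈ Set.Icc (0:ℝ) 1 ∧ a ≤ b ∧
            rn n a = rn n b ∧ |x n t - leftL (x n) t| = |un n b - un n a| := by
        rcases le_total s₁ s₂ with hcmp | hcmp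
        · exact ⟨s₁, s₂, hs₁, hs₂, hcmp, by rw [hrs₁, hrs₂], by rw [hu₁, hu₂]⟩
        · exact ⟨s₂, s₁, hs₂, hs₁, hcmp, by rw [hrs₁, hrs₂], by
            rw [hu₁, hu₂, abs_sub_comm]⟩
      have h1 := abs_le.1 (hdr a ha)
      have h2 := abs_le.1 (hdr b hb)
      have hr0ab : r0 b - r0 a ≤ ε := by
        have hmid : rn n b - rn n a = 0 := by rw [hrab]; ring
        have hkey : r0 b - r0 a
            = -(rn n b - r0 b) + (rn n b - rn n a) + (rn n a - r0 a) := by ring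
        have hma : m ≤ ε / 2 := min_le_left _ _
        rw [hkey, hmid]
        linarith [h1.1, h1.2, h2.1, h2.2]
      have hu0ab : |u0 b - u0 a| ≤ Jmax T x₀ + δ / 2 := hεA a ha b hb hle hr0ab
      have hma : m ≤ δ / 8 := min_le_right _ _
      have hu1 := abs_le.1 (hdu a ha)
      have hu2 := abs_le.1 (hdu b hb)
      calc |x n t - leftL (x n) t| = |un n b - un n a| := habs
        _ ≤ |(un n b - u0 b) + (u0 b - u0 a)| + |-(un n a - u0 a)| := by
            have e : un n b - un n a
                = ((un n b - u0 b) + (u0 b - u0 a)) + -(un n a - u0 a) := by ring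
            rw [e]; exact abs_add_le _ _
        _ ≤ |un n b - u0 b| + |u0 b - u0 a| + |un n a - u0 a| := by
            rw [abs_neg]; exact add_le_add (abs_add_le _ _) le_rfl
        _ ≤ Jmax T x₀ + δ := by
            have := abs_le.2 hu1
            linarith [abs_le.2 hu1, (hdu a ha), (hdu b hb)]
    haveI : Nonempty (Set.Icc (0:ℝ) T) := ⟨⟨0, le_refl _, hT.le⟩⟩
    exact ciSup_le fun t => hptw t.1 t.2
  -- conclude via limsup
  have hcob : Filter.IsCoboundedUnder (· ≤ ·) Filter.atTop (fun n => Jmax T (x n)) :=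
    Filter.isCoboundedUnder_le_of_le Filter.atTop hJnonneg
  refine le_of_forall_pos_le_add ?_
  intro δ hδ
  exact Filter.limsup_le_of_le hcob (hB δ hδ)
end

section
/- Let T > 0 and let x and x_n (n ∈ ℕ) be càdlàg functions on [0,T] with d_{M₁}(x_n, x) → 0 as n → ∞. Then limsup_{n→∞} sup_{t∈[0,T]} |x_n(t) − x(t)| ≤ 3·J_max(x). (Lemma 4.2(b).) -/
open Set Filter MeasureTheory Topology

namespace M1P

variable {T : ℝ} {x : ℝ → ℝ}

lemma leftL_zero : leftL x 0 = x 0 := if_pos rfl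

lemma leftL_ne (t : ℝ) (h : t ≠ 0) : leftL x t = Function.leftLim x t := if_neg h

lemma leftL_tendsto (hx : IsCadlagOn T x) {t : ℝ} (h0 : 0 < t) (hT : t ≤ T) :
    Tendsto x (𝓝[<] t) (𝓝 (leftL x t)) := by
  obtain ⟨L, hL⟩ := hx.2 t ⟨h0, hT⟩
  have h : leftL x t = L := by
    rw [leftL, if_neg h0.ne']
    exact leftLim_eq_of_tendsto hL
  rw [h]; exact hL

lemma loc (hx : IsCadlagOn T x) {t₀ : ℝ} (h₀ : t₀ ∈ Icc 0 T) {ε : ℝ} (hε : 0 < ε) :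
    ∃ δ > 0, (0 < t₀ → ∀ t', t₀ - δ < t' → t' < t₀ → |x t' - leftL x t₀| ≤ ε) ∧
      (t₀ < T → ∀ t', t₀ ≤ t' → t' < t₀ + δ → |x t' - x t₀| ≤ ε) := by
  have hR : ∃ δ > 0, t₀ < T → ∀ t', t₀ ≤ t' → t' < t₀ + δ → |x t' - x t₀| ≤ ε := by
    by_cases hlt : t₀ < T
    · have h1 := hx.1 t₀ ⟨h₀.1, hlt⟩
      rw [Metric.tendsto_nhdsWithin_nhds] at h1
      obtain ⟨δ, hδ, h⟩ := h1 ε hε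
      refine ⟨δ, hδ, fun _ t' h1' h2' => ?_⟩
      have := h (mem_Ici.2 h1') (by rw [Real.dist_eq, abs_of_nonneg (by linarith)]; linarith)
      rw [Real.dist_eq] at this; exact this.le
    · exact ⟨1, one_pos, fun h => absurd h hlt⟩
  have hL : ∃ δ > 0, 0 < t₀ → ∀ t', t₀ - δ < t' → t' < t₀ → |x t' - leftL x t₀| ≤ ε := by
    by_cases h0 : 0 < t₀
    · have h1 := leftL_tendsto hx h0 h₀.2
      rw [Metric.tendsto_nhdsWithin_nhds] at h1
      obtain ⟨δ, hδ, h⟩ := h1 ε hε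
      refine ⟨δ, hδ, fun _ t' h1' h2' => ?_⟩
      have := h (mem_Iio.2 h2') (by rw [Real.dist_eq, abs_of_nonpos (by linarith)]; linarith)
      rw [Real.dist_eq] at this; exact this.le
    · exact ⟨1, one_pos, fun h => absurd h h0⟩
  obtain ⟨δ₁, hδ₁, h1⟩ := hL
  obtain ⟨δ₂, hδ₂, h2⟩ := hR
  exact ⟨min δ₁ δ₂, lt_min hδ₁ hδ₂,
    fun h0 t' ha hb => h1 h0 t' (by have := min_le_left δ₁ δ₂; linarith) hb,
    fun hlt t' ha hb => h2 hlt t' ha (by have := min_le_right δ₁ δ₂; linarith)⟩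

lemma loc' (hx : IsCadlagOn T x) {t₀ : ℝ} (h₀ : t₀ ∈ Icc 0 T) {ε : ℝ} (hε : 0 < ε) :
    ∃ δ > 0,
      (∀ t' ∈ Icc (0:ℝ) T, t₀ - δ < t' → t' < t₀ →
        |x t' - leftL x t₀| ≤ ε ∧ |leftL x t' - leftL x t₀| ≤ ε) ∧
      (∀ t' ∈ Icc (0:ℝ) T, t₀ ≤ t' → t' < t₀ + δ →
        |x t' - x t₀| ≤ ε ∧ (t₀ < t' → |leftL x t' - x t₀| ≤ ε)) := by
  obtain ⟨δ, hδ, hL, hR⟩ := loc hx h₀ hε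
  refine ⟨δ, hδ, fun t' ht' ha hb => ?_, fun t' ht' ha hb => ?_⟩
  · have h0 : 0 < t₀ := lt_of_le_of_lt ht'.1 hb
    have hx' : |x t' - leftL x t₀| ≤ ε := hL h0 t' ha hb
    refine ⟨hx', ?_⟩
    rcases eq_or_lt_of_le ht'.1 with h|h
    · have ht0 : t' = 0 := h.symm
      rw [ht0, leftL_zero]
      rw [ht0] at hx'; exact hx'
    · -- 0 < t'
      have htend : Tendsto x (𝓝[<] t') (𝓝 (leftL x t')) :=
        leftL_tendsto hx h (le_trans hb.le h₀.2)
      have hev : ∀ᶠ s in 𝓝[<] t', |x s - leftL x t₀| ≤ ε := by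
        filter_upwards [Ioo_mem_nhdsLT_of_mem (⟨ha, le_refl t'⟩ : t' ∈ Ioc (t₀ - δ) t')]
          with s hs
        exact hL h0 s hs.1 (hs.2.trans hb)
      have : Tendsto (fun s => |x s - leftL x t₀|) (𝓝[<] t')
          (𝓝 (|leftL x t' - leftL x t₀|)) :=
        ((htend.sub tendsto_const_nhds).abs)
      exact le_of_tendsto this hev
  · rcases eq_or_lt_of_le ha with h|h
    · constructor
      · rw [← h]; simpa using hε.le
      · intro hlt; exact absurd h hlt.ne
    · have hTlt : t₀ < T := lt_of_lt_of_le h ht'.2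
      have hx' : |x t' - x t₀| ≤ ε := hR hTlt t' ha hb
      refine ⟨hx', fun _ => ?_⟩
      have h0' : 0 < t' := lt_of_le_of_lt h₀.1 h
      have htend := leftL_tendsto hx h0' ht'.2
      have hev : ∀ᶠ s in 𝓝[<] t', |x s - x t₀| ≤ ε := by
        filter_upwards [Ioo_mem_nhdsLT_of_mem (⟨h, le_refl t'⟩ : t' ∈ Ioc t₀ t')] with s hs
        exact hR hTlt s hs.1.le (hs.2.trans hb)
      exact le_of_tendsto ((htend.sub tendsto_const_nhds).abs) hev



lemma bdd (hT : 0 < T) (hx : IsCadlagOn T x) :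
    ∃ M : ℝ, ∀ t ∈ Icc (0:ℝ) T, |x t| ≤ M ∧ |leftL x t| ≤ M := by
  -- local bounds
  have hloc : ∀ t₀ ∈ Icc (0:ℝ) T, ∃ δ > 0, ∃ M₀ : ℝ,
      ∀ t' ∈ Icc (0:ℝ) T, t' ∈ Ioo (t₀ - δ) (t₀ + δ) → |x t'| ≤ M₀ ∧ |leftL x t'| ≤ M₀ := by
    intro t₀ h₀
    obtain ⟨δ, hδ, hL, hR⟩ := loc' hx h₀ one_pos
    refine ⟨δ, hδ, max (|x t₀|) (|leftL x t₀|) + 1, fun t' ht' hmem => ?_⟩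
    rcases lt_trichotomy t' t₀ with h|h|h
    · have := hL t' ht' hmem.1 h
      constructor
      · have : |x t'| ≤ |leftL x t₀| + 1 := by
          have h1 := this.1
          have := abs_sub_abs_le_abs_sub (x t') (leftL x t₀)
          linarith
        exact this.trans (by simp [add_le_add_iff_right, le_max_right])
      · have h1 := this.2
        have h2 := abs_sub_abs_le_abs_sub (leftL x t') (leftL x t₀)
        have : |leftL x t'| ≤ |leftL x t₀| + 1 := by linarith
        exact this.trans (by simp [add_le_add_iff_right, le_max_right])
    · subst h
      constructor
      · exact le_trans (le_max_left _ _) (by linarith)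
      · exact le_trans (le_max_right _ _) (by linarith)
    · have := hR t' ht' h.le hmem.2
      constructor
      · have h1 := this.1
        have h2 := abs_sub_abs_le_abs_sub (x t') (x t₀)
        have : |x t'| ≤ |x t₀| + 1 := by linarith
        exact this.trans (by simp [add_le_add_iff_right, le_max_left])
      · have h1 := this.2 h
        have h2 := abs_sub_abs_le_abs_sub (leftL x t') (x t₀)
        have : |leftL x t'| ≤ |x t₀| + 1 := by linarith
        exact this.trans (by simp [add_le_add_iff_right, le_max_left])
  choose! δ hδ M₀ hM₀ using hloc
  have hcov : Icc (0:ℝ) T ⊆ ⋃ t₀ ∈ Icc (0:ℝ) T, Ioo (t₀ - δ t₀) (t₀ + δ t₀) := by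
    intro t ht
    exact mem_biUnion ht ⟨by have := hδ t ht; linarith, by have := hδ t ht; linarith⟩
  obtain ⟨b, hbsub, hbfin, hbcov⟩ := isCompact_Icc.elim_finite_subcover_image
    (fun t₀ _ => isOpen_Ioo) hcov
  obtain ⟨M, hM⟩ := (hbfin.image M₀).bddAbove
  refine ⟨M, fun t ht => ?_⟩
  obtain ⟨i, hi, hti⟩ := mem_iUnion₂.1 (hbcov ht)
  have := hM₀ i (hbsub hi) t ht hti
  have hle : M₀ i ≤ M := hM (mem_image_of_mem M₀ hi)
  exact ⟨this.1.trans hle, this.2.trans hle⟩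

lemma Jmax_nonneg (hT : 0 < T) : 0 ≤ Jmax T x :=
  Real.iSup_nonneg fun _ => abs_nonneg _

lemma jump_le_Jmax (hT : 0 < T) (hx : IsCadlagOn T x) {t : ℝ} (ht : t ∈ Icc 0 T) :
    |x t - leftL x t| ≤ Jmax T x := by
  obtain ⟨M, hM⟩ := bdd hT hx
  have hbdd : BddAbove (Set.range fun t : Icc (0:ℝ) T => |x t.1 - leftL x t.1|) := by
    refine ⟨2 * M, forall_mem_range.2 fun t => ?_⟩
    have := hM t.1 t.2
    have h2 := abs_sub (x t.1) (leftL x t.1)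
    calc |x t.1 - leftL x t.1| ≤ |x t.1| + |leftL x t.1| := abs_sub _ _
    _ ≤ 2 * M := by linarith [this.1, this.2]
  exact le_ciSup hbdd (⟨t, ht⟩ : Icc (0:ℝ) T)

lemma glob (hT : 0 < T) (hx : IsCadlagOn T x) {ε : ℝ} (hε : 0 < ε) :
    ∃ δ > 0, ∀ t ∈ Icc (0:ℝ) T, ∀ t' ∈ Icc (0:ℝ) T, |t' - t| ≤ δ →
      |x t' - x t| ≤ 2 * (Jmax T x + ε) ∧ |leftL x t' - x t| ≤ 2 * (Jmax T x + ε) := by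
  set J := Jmax T x with hJ
  have hloc : ∀ t₀ ∈ Icc (0:ℝ) T, ∃ δ > 0,
      ∀ t' ∈ Icc (0:ℝ) T, t' ∈ Ioo (t₀ - δ) (t₀ + δ) →
        |x t' - x t₀| ≤ J + ε ∧ |leftL x t' - x t₀| ≤ J + ε := by
    intro t₀ h₀
    obtain ⟨δ, hδ, hL, hR⟩ := loc' hx h₀ hε
    have hjump : |x t₀ - leftL x t₀| ≤ J := jump_le_Jmax hT hx h₀
    refine ⟨δ, hδ, fun t' ht' hmem => ?_⟩
    rcases lt_trichotomy t' t₀ with h|h|h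
    · have h1 := hL t' ht' hmem.1 h
      constructor
      · have := abs_sub_le (x t') (leftL x t₀) (x t₀)
        rw [abs_sub_comm (leftL x t₀) (x t₀)] at this
        linarith [h1.1]
      · have := abs_sub_le (leftL x t') (leftL x t₀) (x t₀)
        rw [abs_sub_comm (leftL x t₀) (x t₀)] at this
        linarith [h1.2]
    · subst h
      have hJ0 : 0 ≤ J := Jmax_nonneg hT
      refine ⟨by simpa using (by linarith : (0:ℝ) ≤ J + ε), ?_⟩
      rw [abs_sub_comm]
      linarith
    · have h1 := hR t' ht' h.le hmem.2
      have hJ0 : 0 ≤ J := Jmax_nonneg hT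
      exact ⟨h1.1.trans (by linarith), (h1.2 h).trans (by linarith)⟩
  choose! δ hδ hb using hloc
  have hcov : Icc (0:ℝ) T ⊆ ⋃ t₀ ∈ Icc (0:ℝ) T, Ioo (t₀ - δ t₀ / 2) (t₀ + δ t₀ / 2) := by
    intro t ht
    exact mem_biUnion ht ⟨by have := hδ t ht; linarith, by have := hδ t ht; linarith⟩
  obtain ⟨b, hbsub, hbfin, hbcov⟩ := isCompact_Icc.elim_finite_subcover_image
    (fun t₀ _ => isOpen_Ioo) hcov
  have hbne : b.Nonempty := by
    rcases hbcov (⟨le_refl 0, hT.le⟩ : (0:ℝ) ∈ Icc 0 T) with ht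
    obtain ⟨i, hi, _⟩ := mem_iUnion₂.1 ht
    exact ⟨i, hi⟩
  obtain ⟨i₀, hi₀, hmin⟩ := Set.exists_min_image b (fun i => δ i / 2) hbfin hbne
  refine ⟨δ i₀ / 2, by have := hδ i₀ (hbsub hi₀); linarith, fun t ht t' ht' hdist => ?_⟩
  obtain ⟨i, hi, hti⟩ := mem_iUnion₂.1 (hbcov ht)
  have hii : δ i₀ / 2 ≤ δ i / 2 := hmin i hi
  have h1 : t ∈ Ioo (i - δ i) (i + δ i) := by
    have := hδ i (hbsub hi)
    constructor
    · have := hti.1; linarith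
    · have := hti.2; linarith
  have h2 : t' ∈ Ioo (i - δ i) (i + δ i) := by
    have habs := abs_le.1 hdist
    refine ⟨?_, ?_⟩
    · have := hti.1; linarith [habs.1]
    · have := hti.2; linarith [habs.2]
  have hbt := hb i (hbsub hi) t ht h1
  have hbt' := hb i (hbsub hi) t' ht' h2
  constructor
  · have := abs_sub_le (x t') (x i) (x t)
    rw [abs_sub_comm (x i) (x t)] at this
    linarith [hbt.1, hbt'.1]
  · have := abs_sub_le (leftL x t') (x i) (x t)
    rw [abs_sub_comm (x i) (x t)] at this
    linarith [hbt.1, hbt'.2]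



def Dset (T : ℝ) (x : ℝ → ℝ) : Set ℝ := {t | t ∈ Icc 0 T ∧ x t ≠ leftL x t}

lemma Dset_pos {t : ℝ} (h : t ∈ Dset T x) : 0 < t := by
  rcases eq_or_lt_of_le h.1.1 with h0|h0
  · exact absurd (by rw [← h0, leftL_zero]) h.2
  · exact h0

lemma Dk_finite (hT : 0 < T) (hx : IsCadlagOn T x) (k : ℕ) :
    {t | t ∈ Icc (0:ℝ) T ∧ 1/(k+1 : ℝ) ≤ |x t - leftL x t|}.Finite := by
  set Dk := {t | t ∈ Icc (0:ℝ) T ∧ 1/(k+1 : ℝ) ≤ |x t - leftL x t|} with hDk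
  by_contra hinf
  rw [← Set.Infinite] at hinf
  set e := hinf.natEmbedding with he
  set u : ℕ → ℝ := fun n => (e n : ℝ) with hu
  have humem : ∀ n, u n ∈ Icc (0:ℝ) T := fun n => (e n).2.1
  have huDk : ∀ n, u n ∈ Dk := fun n => (e n).2
  have huinj : Function.Injective u := fun a b hab => e.injective (Subtype.ext hab)
  obtain ⟨t₀, ht₀, φ, hφ, hconv⟩ := isCompact_Icc.tendsto_subseq humem
  have hε : (0:ℝ) < 1/(4*(k+1)) := by positivity
  obtain ⟨δ, hδ, hL, hR⟩ := loc' hx ht₀ hε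
  have hsmall : ∀ t', t' ∈ Icc (0:ℝ) T → dist t' t₀ < δ → t' ≠ t₀ →
      |x t' - leftL x t'| ≤ 2 * (1/(4*(k+1))) := by
    intro t' ht' hdist hne
    rw [Real.dist_eq, abs_lt] at hdist
    rcases lt_or_gt_of_ne hne with h|h
    · have h1 := hL t' ht' (by linarith [hdist.1]) h
      have := abs_sub_le (x t') (leftL x t₀) (leftL x t')
      rw [abs_sub_comm (leftL x t₀) (leftL x t')] at this
      linarith [h1.1, h1.2]
    · have h1 := hR t' ht' h.le (by linarith [hdist.2])
      have := abs_sub_le (x t') (x t₀) (leftL x t')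
      rw [abs_sub_comm (x t₀) (leftL x t')] at this
      linarith [h1.1, h1.2 h]
  obtain ⟨N, hN⟩ := Metric.tendsto_atTop.1 hconv δ hδ
  have hne : u (φ N) ≠ t₀ ∨ u (φ (N+1)) ≠ t₀ := by
    by_contra hcon
    push_neg at hcon
    have h1 : u (φ N) = u (φ (N+1)) := by rw [hcon.1, hcon.2]
    have h2 := huinj h1
    have h3 := hφ (Nat.lt_succ_self N)
    exact absurd h2 h3.ne
  have hcontra : ∀ n, n ≥ N → u (φ n) ≠ t₀ → False := by
    intro n hn hne'
    have h1 := hsmall (u (φ n)) (humem _) (hN n hn) hne'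
    have h2 := (huDk (φ n)).2
    have hk : (0:ℝ) < (k:ℝ)+1 := by positivity
    have h3 : (1:ℝ)/((k:ℝ)+1) ≤ 1/(2*((k:ℝ)+1)) := by
      calc (1:ℝ)/((k:ℝ)+1) ≤ |x (u (φ n)) - leftL x (u (φ n))| := h2
      _ ≤ 2*(1/(4*((k:ℝ)+1))) := h1
      _ = 1/(2*((k:ℝ)+1)) := by field_simp; ring
    rw [div_le_div_iff₀ hk (by positivity)] at h3
    linarith
  rcases hne with h|h
  · exact hcontra N le_rfl h
  · exact hcontra (N+1) (Nat.le_succ N) h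

lemma Dset_countable (hT : 0 < T) (hx : IsCadlagOn T x) : (Dset T x).Countable := by
  have hsub : Dset T x ⊆ ⋃ k : ℕ, {t | t ∈ Icc (0:ℝ) T ∧ 1/(k+1 : ℝ) ≤ |x t - leftL x t|} := by
    intro t ht
    have : 0 < |x t - leftL x t| := abs_pos.2 (sub_ne_zero.2 ht.2)
    obtain ⟨n, hn⟩ := exists_nat_one_div_lt this
    exact mem_iUnion.2 ⟨n, ht.1, by push_cast; linarith⟩
  exact Set.Countable.mono hsub
    (Set.countable_iUnion fun k => (Dk_finite hT hx k).countable)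


section Sums

open scoped Classical

variable {D : Set ℝ} {p : ↥D → ℝ}

lemma ite_nn {c : Prop} [Decidable c] {a : ℝ} (h : 0 ≤ a) : (0:ℝ) ≤ if c then a else 0 := by
  split; exacts [h, le_rfl]

noncomputable def sumle (D : Set ℝ) (p : ↥D → ℝ) (t : ℝ) : ℝ :=
  ∑' d : ↥D, if (d:ℝ) ≤ t then p d else 0

noncomputable def sumlt (D : Set ℝ) (p : ↥D → ℝ) (t : ℝ) : ℝ :=
  ∑' d : ↥D, if (d:ℝ) < t then p d else 0

noncomputable def phi (D : Set ℝ) (p : ↥D → ℝ) (t : ℝ) : ℝ := t + sumle D p t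

noncomputable def phim (D : Set ℝ) (p : ↥D → ℝ) (t : ℝ) : ℝ := t + sumlt D p t

variable (hp : ∀ d, 0 ≤ p d) (hsum : Summable p)
include hp hsum

lemma summable_le (t : ℝ) : Summable (fun d : ↥D => if (d:ℝ) ≤ t then p d else 0) :=
  Summable.of_nonneg_of_le (fun d => ite_nn (hp d))
    (fun d => by split <;> simp [hp d]) hsum

lemma summable_lt (t : ℝ) : Summable (fun d : ↥D => if (d:ℝ) < t then p d else 0) :=
  Summable.of_nonneg_of_le (fun d => ite_nn (hp d))
    (fun d => by split <;> simp [hp d]) hsum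

lemma sumle_nonneg (t : ℝ) : 0 ≤ sumle D p t :=
  tsum_nonneg fun d => ite_nn (hp d)

lemma sumlt_nonneg (t : ℝ) : 0 ≤ sumlt D p t :=
  tsum_nonneg fun d => ite_nn (hp d)

lemma sumle_mono {t t' : ℝ} (h : t ≤ t') : sumle D p t ≤ sumle D p t' := by
  refine Summable.tsum_le_tsum (fun d => ?_) (summable_le hp hsum t) (summable_le hp hsum t')
  by_cases hd : (d:ℝ) ≤ t
  · rw [if_pos hd, if_pos (hd.trans h)]
  · rw [if_neg hd]; exact ite_nn (hp d)

lemma sumlt_le_sumle (t : ℝ) : sumlt D p t ≤ sumle D p t := by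
  refine Summable.tsum_le_tsum (fun d => ?_) (summable_lt hp hsum t) (summable_le hp hsum t)
  by_cases hd : (d:ℝ) < t
  · rw [if_pos hd, if_pos hd.le]
  · rw [if_neg hd]; exact ite_nn (hp d)

lemma sumle_le_sumlt {t t' : ℝ} (h : t < t') : sumle D p t ≤ sumlt D p t' := by
  refine Summable.tsum_le_tsum (fun d => ?_) (summable_le hp hsum t) (summable_lt hp hsum t')
  by_cases hd : (d:ℝ) ≤ t
  · rw [if_pos hd, if_pos (lt_of_le_of_lt hd h)]
  · rw [if_neg hd]; exact ite_nn (hp d)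

lemma sumlt_mono {t t' : ℝ} (h : t ≤ t') : sumlt D p t ≤ sumlt D p t' := by
  refine Summable.tsum_le_tsum (fun d => ?_) (summable_lt hp hsum t) (summable_lt hp hsum t')
  by_cases hd : (d:ℝ) < t
  · rw [if_pos hd, if_pos (lt_of_lt_of_le hd h)]
  · rw [if_neg hd]; exact ite_nn (hp d)

lemma phi_strictMono : StrictMono (phi D p) := by
  intro t t' h
  have := sumle_mono hp hsum h.le
  simp only [phi]; linarith

lemma phim_le_phi (t : ℝ) : phim D p t ≤ phi D p t := by
  have := sumlt_le_sumle hp hsum (p := p) t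
  simp only [phi, phim]; linarith

lemma phi_le_phim {t t' : ℝ} (h : t < t') : phi D p t ≤ phim D p t' := by
  have := sumle_le_sumlt hp hsum (p := p) h
  simp only [phi, phim]; linarith

lemma sumle_split (t : ℝ) :
    sumle D p t = sumlt D p t + (if h : t ∈ D then p ⟨t, h⟩ else 0) := by
  have heq : ∀ d : ↥D, (if (d:ℝ) ≤ t then p d else 0) =
      (if (d:ℝ) < t then p d else 0) + (if (d:ℝ) = t then p d else 0) := by
    intro d
    rcases lt_trichotomy (d:ℝ) t with h|h|h
    · rw [if_pos h.le, if_pos h, if_neg h.ne, add_zero]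
    · rw [if_pos h.le, if_neg (by rw [h]; exact lt_irrefl t), if_pos h, zero_add]
    · rw [if_neg (not_le.2 h), if_neg (not_lt.2 h.le), if_neg h.ne', add_zero]
  have hsum2 : Summable (fun d : ↥D => if (d:ℝ) = t then p d else 0) := by
    refine Summable.of_nonneg_of_le (fun d => ite_nn (hp d))
      (fun d => by split <;> simp [hp d]) hsum
  calc sumle D p t = ∑' d : ↥D, ((if (d:ℝ) < t then p d else 0) + (if (d:ℝ) = t then p d else 0)) := by
        rw [sumle]; exact tsum_congr heq
  _ = sumlt D p t + ∑' d : ↥D, (if (d:ℝ) = t then p d else 0) :=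
        Summable.tsum_add (summable_lt hp hsum t) hsum2
  _ = sumlt D p t + (if h : t ∈ D then p ⟨t, h⟩ else 0) := by
        congr 1
        by_cases ht : t ∈ D
        · rw [dif_pos ht]
          rw [tsum_eq_single (⟨t, ht⟩ : ↥D)]
          · rw [if_pos rfl]
          · intro d hd
            rw [if_neg]
            intro hc
            exact hd (Subtype.ext hc)
        · rw [dif_neg ht]
          have hz : ∀ d : ↥D, (if (d:ℝ) = t then p d else 0) = 0 := by
            intro d
            rw [if_neg]
            intro hc
            exact ht (hc ▸ d.2)
          rw [tsum_congr hz, tsum_zero]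

lemma tail_small {ε : ℝ} (hε : 0 < ε) :
    ∃ F : Finset ↥D, ∑' d : ↥D, (if d ∈ F then 0 else p d) ≤ ε := by
  have hW := hsum.hasSum
  obtain ⟨F, hF⟩ := (hW.eventually (Metric.ball_mem_nhds _ hε)).exists
  refine ⟨F, ?_⟩
  have heq : ∀ d : ↥D, (if d ∈ F then 0 else p d) = p d - (if d ∈ F then p d else 0) := by
    intro d; split <;> simp
  have hsumF : Summable (fun d : ↥D => if d ∈ F then p d else 0) := by
    refine Summable.of_nonneg_of_le (fun d => ite_nn (hp d))
      (fun d => by split <;> simp [hp d]) hsum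
  rw [tsum_congr heq, Summable.tsum_sub hsum hsumF]
  have h1 : ∑' d : ↥D, (if d ∈ F then p d else 0) = ∑ d ∈ F, p d := by
    rw [tsum_eq_sum (f := fun d : ↥D => if d ∈ F then p d else 0) (s := F)
      (fun d hd => if_neg hd)]
    exact Finset.sum_congr rfl fun d hd => if_pos hd
  rw [h1]
  rw [Real.dist_eq, abs_lt] at hF
  linarith [hF.1]


lemma approx_right (t : ℝ) {ε : ℝ} (hε : 0 < ε) :
    ∃ t', t < t' ∧ t' < t + ε ∧ sumle D p t' ≤ sumle D p t + ε := by
  obtain ⟨F, hF⟩ := tail_small hp hsum hε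
  set G := F.filter (fun d : ↥D => t < (d:ℝ)) with hG
  set t' : ℝ := if hGn : G.Nonempty then
      min (t + ε/2) ((t + (G.min' hGn : ℝ))/2) else t + ε/2 with ht'
  have hmin : ∀ d ∈ G, t < (d:ℝ) := fun d hd => (Finset.mem_filter.1 hd).2
  have h1 : t < t' := by
    rw [ht']
    split
    · rename_i hGn
      have := hmin _ (G.min'_mem hGn)
      exact lt_min (by linarith) (by linarith)
    · linarith
  have h2 : t' < t + ε := by
    rw [ht']
    split
    · exact lt_of_le_of_lt (min_le_left _ _) (by linarith)
    · linarith
  have havoid : ∀ d : ↥D, d ∈ F → t < (d:ℝ) → ¬((d:ℝ) ≤ t') := by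
    intro d hdF hdt hle
    have hdG : d ∈ G := Finset.mem_filter.2 ⟨hdF, hdt⟩
    have hGn : G.Nonempty := ⟨d, hdG⟩
    have hm := G.min'_le _ hdG
    have hmt := hmin _ (G.min'_mem hGn)
    rw [ht', dif_pos hGn] at hle
    have := hle.trans (min_le_right _ _)
    have : (d:ℝ) ≤ (t + (G.min' hGn : ℝ))/2 := this
    have : ((G.min' hGn : ↥D) : ℝ) ≤ (d:ℝ) := by exact_mod_cast hm
    linarith
  refine ⟨t', h1, h2, ?_⟩
  have hpt : ∀ d : ↥D, (if (d:ℝ) ≤ t' then p d else 0) ≤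
      (if (d:ℝ) ≤ t then p d else 0) + (if d ∈ F then 0 else p d) := by
    intro d
    by_cases hd : (d:ℝ) ≤ t
    · rw [if_pos hd, if_pos (hd.trans h1.le)]
      have : (0:ℝ) ≤ if d ∈ F then 0 else p d := by split; exacts [le_rfl, hp d]
      linarith
    · rw [if_neg hd]
      by_cases hd' : (d:ℝ) ≤ t'
      · rw [if_pos hd']
        have hdF : d ∉ F := fun hdF => havoid d hdF (not_le.1 hd) hd'
        rw [if_neg hdF]
        linarith
      · rw [if_neg hd']
        have h3 : (0:ℝ) ≤ if (d:ℝ) ≤ t then p d else 0 := ite_nn (hp d)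
        have h4 : (0:ℝ) ≤ if d ∈ F then 0 else p d := by split; exacts [le_rfl, hp d]
        linarith
  have hsum3 : Summable (fun d : ↥D => (if (d:ℝ) ≤ t then p d else 0) + (if d ∈ F then 0 else p d)) := by
    refine Summable.add (summable_le hp hsum t) ?_
    refine Summable.of_nonneg_of_le (fun d => ?_) (fun d => ?_) hsum
    · split; exacts [le_rfl, hp d]
    · split; exacts [hp d, le_rfl]
  have := Summable.tsum_le_tsum hpt (summable_le hp hsum t') hsum3
  rw [Summable.tsum_add (summable_le hp hsum t) (by
    refine Summable.of_nonneg_of_le (fun d => ?_) (fun d => ?_) hsum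
    · split; exacts [le_rfl, hp d]
    · split; exacts [hp d, le_rfl])] at this
  calc sumle D p t' ≤ sumle D p t + ∑' d : ↥D, (if d ∈ F then 0 else p d) := this
  _ ≤ sumle D p t + ε := by linarith

lemma approx_left (t : ℝ) {ε : ℝ} (hε : 0 < ε) :
    ∃ t', t - ε < t' ∧ t' < t ∧ sumlt D p t ≤ sumle D p t' + ε := by
  obtain ⟨F, hF⟩ := tail_small hp hsum hε
  set G := F.filter (fun d : ↥D => (d:ℝ) < t) with hG
  set t' : ℝ := if hGn : G.Nonempty then
      max (t - ε/2) ((t + (G.max' hGn : ℝ))/2) else t - ε/2 with ht'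
  have hmax : ∀ d ∈ G, (d:ℝ) < t := fun d hd => (Finset.mem_filter.1 hd).2
  have h1 : t' < t := by
    rw [ht']
    split
    · rename_i hGn
      have := hmax _ (G.max'_mem hGn)
      exact max_lt (by linarith) (by linarith)
    · linarith
  have h2 : t - ε < t' := by
    rw [ht']
    split
    · exact lt_of_lt_of_le (by linarith) (le_max_left _ _)
    · linarith
  have havoid : ∀ d : ↥D, d ∈ F → (d:ℝ) < t → (d:ℝ) ≤ t' := by
    intro d hdF hdt
    have hdG : d ∈ G := Finset.mem_filter.2 ⟨hdF, hdt⟩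
    have hGn : G.Nonempty := ⟨d, hdG⟩
    have hm := G.le_max' _ hdG
    have hm' : (d:ℝ) ≤ ((G.max' hGn : ↥D) : ℝ) := by exact_mod_cast hm
    have hmt := hmax _ (G.max'_mem hGn)
    rw [ht', dif_pos hGn]
    exact le_trans (by linarith) (le_max_right _ _)
  refine ⟨t', h2, h1, ?_⟩
  have hpt : ∀ d : ↥D, (if (d:ℝ) < t then p d else 0) ≤
      (if (d:ℝ) ≤ t' then p d else 0) + (if d ∈ F then 0 else p d) := by
    intro d
    by_cases hd : (d:ℝ) < t
    · rw [if_pos hd]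
      by_cases hd' : (d:ℝ) ≤ t'
      · rw [if_pos hd']
        have : (0:ℝ) ≤ if d ∈ F then 0 else p d := by split; exacts [le_rfl, hp d]
        linarith
      · have hdF : d ∉ F := fun hdF => hd' (havoid d hdF hd)
        rw [if_neg hdF]
        have := ite_nn (c := ((d:ℝ) ≤ t')) (hp d)
        linarith
    · rw [if_neg hd]
      have h3 := ite_nn (c := ((d:ℝ) ≤ t')) (hp d)
      have h4 : (0:ℝ) ≤ if d ∈ F then 0 else p d := by split; exacts [le_rfl, hp d]
      linarith
  have hsumtail : Summable (fun d : ↥D => if d ∈ F then 0 else p d) := by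
    refine Summable.of_nonneg_of_le (fun d => ?_) (fun d => ?_) hsum
    · split; exacts [le_rfl, hp d]
    · split; exacts [hp d, le_rfl]
  have := Summable.tsum_le_tsum hpt (summable_lt hp hsum t) ((summable_le hp hsum t').add hsumtail)
  rw [Summable.tsum_add (summable_le hp hsum t') hsumtail] at this
  calc sumlt D p t ≤ sumle D p t' + ∑' d : ↥D, (if d ∈ F then 0 else p d) := this
  _ ≤ sumle D p t' + ε := by linarith

end Sums

section Gdef

open scoped Classical

variable {D : Set ℝ} {p : ↥D → ℝ} {T : ℝ}

noncomputable def gfun (D : Set ℝ) (p : ↥D → ℝ) (T : ℝ) (s : ℝ) : ℝ :=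
  sSup {t | t ∈ Icc 0 T ∧ phi D p t ≤ s * phi D p T}

variable (hp : ∀ d, 0 ≤ p d) (hsum : Summable p) (hT : 0 < T)
  (hD : ∀ d : ↥D, 0 < (d:ℝ))
include hp hsum hT hD

lemma sumle_zero : sumle D p 0 = 0 := by
  rw [sumle]
  have h : ∀ d : ↥D, (if (d:ℝ) ≤ 0 then p d else 0) = 0 :=
    fun d => if_neg (not_le.2 (hD d))
  rw [tsum_congr h, tsum_zero]

lemma sumlt_zero : sumlt D p 0 = 0 := by
  rw [sumlt]
  have h : ∀ d : ↥D, (if (d:ℝ) < 0 then p d else 0) = 0 :=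
    fun d => if_neg (not_lt.2 (hD d).le)
  rw [tsum_congr h, tsum_zero]

lemma phi_zero : phi D p 0 = 0 := by
  rw [phi, sumle_zero hp hsum hT hD, add_zero]

lemma phim_zero : phim D p 0 = 0 := by
  rw [phim, sumlt_zero hp hsum hT hD, add_zero]

lemma c_pos : 0 < phi D p T := by
  have := sumle_nonneg hp hsum (p := p) T
  rw [phi]; linarith

lemma phim_nonneg {t : ℝ} (ht : 0 ≤ t) : 0 ≤ phim D p t := by
  have := sumlt_nonneg hp hsum (p := p) t
  rw [phim]; linarith

lemma A_bdd (s : ℝ) : BddAbove {t | t ∈ Icc 0 T ∧ phi D p t ≤ s * phi D p T} :=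
  ⟨T, fun t ht => ht.1.2⟩

lemma A_mem_zero {s : ℝ} (hs : 0 ≤ s) :
    (0:ℝ) ∈ {t | t ∈ Icc 0 T ∧ phi D p t ≤ s * phi D p T} :=
  ⟨⟨le_rfl, hT.le⟩, by
    rw [phi_zero hp hsum hT hD]
    exact mul_nonneg hs (c_pos hp hsum hT hD).le⟩

lemma g_nonneg {s : ℝ} (hs : 0 ≤ s) : 0 ≤ gfun D p T s :=
  le_csSup (A_bdd hp hsum hT hD s) (A_mem_zero hp hsum hT hD hs)

lemma g_le_T {s : ℝ} (hs : 0 ≤ s) : gfun D p T s ≤ T :=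
  csSup_le ⟨0, A_mem_zero hp hsum hT hD hs⟩ fun t ht => ht.1.2

lemma g_mem {s : ℝ} (hs : 0 ≤ s) : gfun D p T s ∈ Icc 0 T :=
  ⟨g_nonneg hp hsum hT hD hs, g_le_T hp hsum hT hD hs⟩

lemma g_monoOn : MonotoneOn (gfun D p T) (Icc 0 1) := by
  intro s hs s' hs' h
  refine csSup_le_csSup (A_bdd hp hsum hT hD s') ⟨0, A_mem_zero hp hsum hT hD hs.1⟩
    fun t ht => ⟨ht.1, ht.2.trans ?_⟩
  exact mul_le_mul_of_nonneg_right h (c_pos hp hsum hT hD).le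

lemma g_zero : gfun D p T 0 = 0 := by
  refine le_antisymm (csSup_le ⟨0, A_mem_zero hp hsum hT hD le_rfl⟩ fun t ht => ?_)
    (g_nonneg hp hsum hT hD le_rfl)
  by_contra hc
  push_neg at hc
  have h1 : phi D p 0 < phi D p t := phi_strictMono hp hsum hc
  rw [phi_zero hp hsum hT hD] at h1
  have := ht.2
  rw [zero_mul] at this
  linarith

lemma g_one : gfun D p T 1 = T := by
  refine le_antisymm (g_le_T hp hsum hT hD zero_le_one)
    (le_csSup (A_bdd hp hsum hT hD 1) ⟨⟨hT.le, le_rfl⟩, by rw [one_mul]⟩)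

lemma g_nonneg' (s : ℝ) : 0 ≤ gfun D p T s := by
  rcases Set.eq_empty_or_nonempty {t | t ∈ Icc 0 T ∧ phi D p t ≤ s * phi D p T} with h|h
  · rw [gfun, h, Real.sSup_empty]
  · obtain ⟨a, ha⟩ := h
    exact le_trans ha.1.1 (le_csSup (A_bdd hp hsum hT hD s) ha)

lemma phi_lt_of_lt_g {s t : ℝ} (hs : 0 ≤ s) (ht : t < gfun D p T s) :
    phi D p t < s * phi D p T := by
  obtain ⟨a, ha, hta⟩ := exists_lt_of_lt_csSup ⟨0, A_mem_zero hp hsum hT hD hs⟩ ht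
  exact lt_of_lt_of_le (phi_strictMono hp hsum hta) ha.2

lemma lt_phi_of_g_lt {s t : ℝ} (hs : s ≤ 1) (hg : gfun D p T s < t) (htT : t ≤ T) :
    s * phi D p T < phi D p t := by
  by_contra hc
  push_neg at hc
  rcases le_or_gt 0 t with h0|h0
  · have : t ∈ {t | t ∈ Icc 0 T ∧ phi D p t ≤ s * phi D p T} := ⟨⟨h0, htT⟩, hc⟩
    exact absurd (le_csSup (A_bdd hp hsum hT hD s) this) (not_le.2 hg)
  · have h1 : gfun D p T s < 0 := lt_trans hg h0
    exact absurd (g_nonneg' hp hsum hT hD s) (not_le.2 h1)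

lemma key1 {s : ℝ} (hs : s ∈ Icc (0:ℝ) 1) : s * phi D p T ≤ phi D p (gfun D p T s) := by
  set c := phi D p T
  set t₀ := gfun D p T s with ht₀
  rcases eq_or_lt_of_le (g_le_T hp hsum hT hD hs.1) with hTeq|hTlt
  · rw [ht₀, hTeq]
    calc s * c ≤ 1 * c := mul_le_mul_of_nonneg_right hs.2 (c_pos hp hsum hT hD).le
    _ = phi D p T := one_mul c
  · by_contra hc
    push_neg at hc
    set ε := min ((s * c - phi D p t₀)/2) (T - t₀) with hε
    have hε0 : 0 < ε := lt_min (by linarith) (by linarith)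
    obtain ⟨t', h1, h2, h3⟩ := approx_right hp hsum t₀ hε0
    have hphi : phi D p t' < s * c := by
      have hεle : ε ≤ (s * c - phi D p t₀)/2 := min_le_left _ _
      have e1 : phi D p t' = t' + sumle D p t' := rfl
      have e2 : phi D p t₀ = t₀ + sumle D p t₀ := rfl
      linarith [e1, e2, h2, h3, hεle]
    have ht'T : t' ≤ T := by
      have : ε ≤ T - t₀ := min_le_right _ _
      linarith
    have ht'0 : 0 ≤ t' := le_trans (g_nonneg hp hsum hT hD hs.1) h1.le
    have hmem : t' ∈ {t | t ∈ Icc 0 T ∧ phi D p t ≤ s * c} := ⟨⟨ht'0, ht'T⟩, hphi.le⟩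
    have hfin : t' ≤ t₀ := le_csSup (A_bdd hp hsum hT hD s) hmem
    linarith

lemma key2 {s : ℝ} (hs : s ∈ Icc (0:ℝ) 1) : phim D p (gfun D p T s) ≤ s * phi D p T := by
  set c := phi D p T
  set t₀ := gfun D p T s with ht₀
  rcases eq_or_lt_of_le (g_nonneg hp hsum hT hD hs.1) with h0|h0
  · rw [ht₀, ← h0, phim_zero hp hsum hT hD]
    exact mul_nonneg hs.1 (c_pos hp hsum hT hD).le
  · by_contra hc
    push_neg at hc
    set ε := (phim D p t₀ - s * c)/4 with hε
    have hε0 : 0 < ε := by rw [hε]; linarith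
    obtain ⟨t', h1, h2, h3⟩ := approx_left hp hsum t₀ hε0
    have hεeq : phim D p t₀ = s * c + 4*ε := by rw [hε]; ring
    have e4 : phim D p t₀ = t₀ + sumlt D p t₀ := rfl
    have e5 : phi D p t' = t' + sumle D p t' := rfl
    have hlt : phi D p t' < s * c := phi_lt_of_lt_g hp hsum hT hD hs.1 h2
    linarith [e4, e5, h1, h3, hlt, hεeq]

lemma g_eq {s t : ℝ} (ht : t ∈ Icc 0 T) (h1 : phim D p t ≤ s * phi D p T)
    (h2 : s * phi D p T ≤ phi D p t) : gfun D p T s = t := by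
  set c := phi D p T
  have hsc0 : 0 ≤ s * c := le_trans (phim_nonneg hp hsum hT hD ht.1) h1
  refine le_antisymm ?_ ?_
  · refine csSup_le ⟨0, ⟨⟨le_rfl, hT.le⟩, by rw [phi_zero hp hsum hT hD]; exact hsc0⟩⟩
      fun a ha => ?_
    by_contra hca
    push_neg at hca
    have := phi_strictMono hp hsum hca
    have := ha.2
    linarith
  · refine le_of_forall_pos_le_add fun ε hε => ?_
    rcases le_or_gt t ε with h|h
    · have hs0 : 0 ≤ s := by
        by_contra hcs
        push_neg at hcs
        have := mul_neg_of_neg_of_pos hcs (c_pos hp hsum hT hD)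
        linarith
      have := g_nonneg hp hsum hT hD hs0
      linarith
    · have hmem : t - ε ∈ {a | a ∈ Icc 0 T ∧ phi D p a ≤ s * c} := by
        refine ⟨⟨by linarith [ht.1], by linarith [ht.2]⟩, ?_⟩
        have hsle : sumle D p (t-ε) ≤ sumlt D p t := sumle_le_sumlt hp hsum (by linarith)
        have : phi D p (t-ε) = (t-ε) + sumle D p (t-ε) := rfl
        have h4 : phim D p t = t + sumlt D p t := rfl
        rw [this]
        calc (t-ε) + sumle D p (t-ε) ≤ (t-ε) + sumlt D p t := by linarith
        _ ≤ phim D p t := by rw [h4]; linarith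
        _ ≤ s * c := h1
      have hfin : t - ε ≤ gfun D p T s := le_csSup (A_bdd hp hsum hT hD s) hmem
      linarith

lemma s_ge_zero {s t : ℝ} (ht : t ∈ Icc 0 T) (h1 : phim D p t ≤ s * phi D p T) : 0 ≤ s := by
  have hsc0 : 0 ≤ s * phi D p T := le_trans (phim_nonneg hp hsum hT hD ht.1) h1
  by_contra hc
  push_neg at hc
  have := mul_neg_of_neg_of_pos hc (c_pos hp hsum hT hD)
  linarith

lemma s_le_one {s t : ℝ} (ht : t ∈ Icc 0 T) (h2 : s * phi D p T ≤ phi D p t) : s ≤ 1 := by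
  have : phi D p t ≤ phi D p T := (phi_strictMono hp hsum).monotone ht.2
  have h3 : s * phi D p T ≤ 1 * phi D p T := by rw [one_mul]; linarith
  exact le_of_mul_le_mul_right h3 (c_pos hp hsum hT hD)


lemma claimR {s₀ ε : ℝ} (hs₀ : s₀ ∈ Ico (0:ℝ) 1) (hε : 0 < ε) :
    ∃ s', s₀ < s' ∧ s' ≤ 1 ∧ gfun D p T s' < gfun D p T s₀ + ε := by
  by_contra hcon
  push_neg at hcon
  have hc : 0 < phi D p T := c_pos hp hsum hT hD
  obtain ⟨t, htdef⟩ : ∃ t, t = gfun D p T s₀ + ε/2 := ⟨_, rfl⟩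
  have hg0 : 0 ≤ gfun D p T s₀ := g_nonneg hp hsum hT hD hs₀.1
  have htT : t ≤ T := by
    have h1 : (s₀+1)/2 ≤ 1 := by linarith [hs₀.2]
    have h2 : s₀ < (s₀+1)/2 := by linarith [hs₀.2]
    have h3 := hcon _ h2 h1
    have h4 : gfun D p T ((s₀+1)/2) ≤ T := g_le_T hp hsum hT hD (by linarith [hs₀.1])
    linarith
  have hstep : ∀ s', s₀ < s' → s' ≤ 1 → phi D p t < s' * phi D p T := by
    intro s' h1 h2
    have h3 := hcon s' h1 h2
    have h4 : t < gfun D p T s' := by linarith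
    exact phi_lt_of_lt_g hp hsum hT hD (by linarith [hs₀.1]) h4
  have hle : phi D p t ≤ s₀ * phi D p T := by
    by_contra hcp
    push_neg at hcp
    have hptc : phi D p t ≤ phi D p T := (phi_strictMono hp hsum).monotone htT
    have h5 : s₀ < phi D p t / phi D p T := by rwa [lt_div_iff₀ hc]
    have h6 : phi D p t / phi D p T ≤ 1 := by rwa [div_le_one hc]
    obtain ⟨s', hs'def⟩ : ∃ s', s' = (s₀ + phi D p t / phi D p T)/2 := ⟨_, rfl⟩
    have h7 : s₀ < s' := by rw [hs'def]; linarith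
    have h8 : s' < phi D p t / phi D p T := by rw [hs'def]; linarith
    have h9 : s' ≤ 1 := by linarith
    have h10 := hstep s' h7 h9
    have h11 : s' * phi D p T < phi D p t := by rwa [← lt_div_iff₀ hc]
    linarith
  have hmem : t ∈ {a | a ∈ Icc 0 T ∧ phi D p a ≤ s₀ * phi D p T} := ⟨⟨by linarith, htT⟩, hle⟩
  have hfin : t ≤ gfun D p T s₀ := le_csSup (A_bdd hp hsum hT hD s₀) hmem
  linarith

lemma claimL {s₀ ε : ℝ} (hs₀ : s₀ ∈ Ioc (0:ℝ) 1) (hε : 0 < ε) :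
    ∃ s', s' < s₀ ∧ 0 ≤ s' ∧ gfun D p T s₀ - ε < gfun D p T s' := by
  by_contra hcon
  push_neg at hcon
  have hc : 0 < phi D p T := c_pos hp hsum hT hD
  have hgε : ε ≤ gfun D p T s₀ := by
    have h0 := hcon 0 hs₀.1 le_rfl
    rw [g_zero hp hsum hT hD] at h0
    linarith
  obtain ⟨t, htdef⟩ : ∃ t, t = gfun D p T s₀ - ε/2 := ⟨_, rfl⟩
  have ht0 : 0 < t := by rw [htdef]; linarith
  have htT : t ≤ T := by
    have := g_le_T hp hsum hT hD (by linarith [hs₀.1] : (0:ℝ) ≤ s₀)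
    rw [htdef]; linarith
  have h1 : phi D p t < s₀ * phi D p T := by
    have h : t < gfun D p T s₀ := by rw [htdef]; linarith
    exact phi_lt_of_lt_g hp hsum hT hD (by linarith [hs₀.1]) h
  have h2 : ∀ s', 0 ≤ s' → s' < s₀ → s' * phi D p T < phi D p t := by
    intro s' ha hb
    by_contra hcp
    push_neg at hcp
    have hmem : t ∈ {a | a ∈ Icc 0 T ∧ phi D p a ≤ s' * phi D p T} := ⟨⟨ht0.le, htT⟩, hcp⟩
    have h3 := hcon s' hb ha
    have ht' : t ≤ gfun D p T s' := le_csSup (A_bdd hp hsum hT hD s') hmem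
    rw [htdef] at ht'
    linarith
  have h5 : 0 ≤ phi D p t := by
    have := sumle_nonneg hp hsum (p := p) t
    have e : phi D p t = t + sumle D p t := rfl
    linarith
  obtain ⟨s', hs'def⟩ : ∃ s', s' = max 0 (phi D p t / phi D p T) := ⟨_, rfl⟩
  have h6 : s' < s₀ := by
    rw [hs'def]
    refine max_lt hs₀.1 ?_
    rwa [div_lt_iff₀ hc]
  have h7 : 0 ≤ s' := by rw [hs'def]; exact le_max_left _ _
  have h8 := h2 s' h7 h6
  have h9 : phi D p t ≤ s' * phi D p T := by
    have h : phi D p t / phi D p T ≤ s' := by rw [hs'def]; exact le_max_right _ _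
    rwa [div_le_iff₀ hc] at h
  linarith

lemma g_contOn : ContinuousOn (gfun D p T) (Icc 0 1) := by
  intro s₀ hs₀
  rw [Metric.continuousWithinAt_iff]
  intro ε hε
  -- right bound
  have hR : ∃ δR > 0, ∀ s' ∈ Icc (0:ℝ) 1, s₀ ≤ s' → s' - s₀ < δR →
      gfun D p T s' - gfun D p T s₀ < ε := by
    rcases lt_or_ge s₀ 1 with h1|h1
    · obtain ⟨sR, ha, hb, hc⟩ := claimR hp hsum hT hD ⟨hs₀.1, h1⟩ hε
      refine ⟨sR - s₀, by linarith, fun s' hs' h2 h3 => ?_⟩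
      have h4 : gfun D p T s' ≤ gfun D p T sR :=
        g_monoOn hp hsum hT hD hs' ⟨by linarith [hs₀.1], hb⟩ (by linarith)
      linarith
    · refine ⟨1, one_pos, fun s' hs' h2 h3 => ?_⟩
      have : s' = s₀ := le_antisymm (hs'.2.trans h1) h2
      rw [this]; linarith
  have hL : ∃ δL > 0, ∀ s' ∈ Icc (0:ℝ) 1, s' ≤ s₀ → s₀ - s' < δL →
      gfun D p T s₀ - gfun D p T s' < ε := by
    rcases lt_or_ge 0 s₀ with h1|h1
    · obtain ⟨sL, ha, hb, hc⟩ := claimL hp hsum hT hD ⟨h1, hs₀.2⟩ hε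
      refine ⟨s₀ - sL, by linarith, fun s' hs' h2 h3 => ?_⟩
      have h4 : gfun D p T sL ≤ gfun D p T s' :=
        g_monoOn hp hsum hT hD ⟨hb, by linarith [hs₀.2]⟩ hs' (by linarith)
      linarith
    · refine ⟨1, one_pos, fun s' hs' h2 h3 => ?_⟩
      have : s' = s₀ := le_antisymm h2 (h1.trans hs'.1)
      rw [this]; linarith
  obtain ⟨δR, hδR, hRb⟩ := hR
  obtain ⟨δL, hδL, hLb⟩ := hL
  refine ⟨min δR δL, lt_min hδR hδL, fun s' hs' hdist => ?_⟩
  rw [Real.dist_eq] at hdist ⊢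
  rw [abs_lt] at hdist
  rcases le_or_gt s₀ s' with h|h
  · have hmono : gfun D p T s₀ ≤ gfun D p T s' := g_monoOn hp hsum hT hD hs₀ hs' h
    rw [abs_of_nonneg (by linarith)]
    have := hRb s' hs' h (by have := min_le_left δR δL; linarith [hdist.2])
    linarith
  · have hmono : gfun D p T s' ≤ gfun D p T s₀ := g_monoOn hp hsum hT hD hs' hs₀ h.le
    rw [abs_of_nonpos (by linarith)]
    have := hLb s' hs' h.le (by have := min_le_right δR δL; linarith [hdist.1])
    linarith

end Gdef

lemma segment_param {a b v : ℝ} (hv : v ∈ segment ℝ a b) :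
    ∃ θ, 0 ≤ θ ∧ θ ≤ 1 ∧ v = a + θ * (b - a) := by
  obtain ⟨c, d, hc, hd, hcd, hv⟩ := hv
  refine ⟨d, hd, by linarith, ?_⟩
  simp only [smul_eq_mul] at hv
  have hc1 : c = 1 - d := by linarith
  rw [← hv, hc1]; ring

lemma mem_segment_real {a b θ : ℝ} (h0 : 0 ≤ θ) (h1 : θ ≤ 1) :
    a + θ * (b - a) ∈ segment ℝ a b := by
  refine ⟨1 - θ, θ, by linarith, h0, by ring, ?_⟩
  simp only [smul_eq_mul]; ring

lemma seg_dist {a b v z : ℝ} (hv : v ∈ segment ℝ a b) (ha : |a - z| ≤ C) (hb : |b - z| ≤ C) :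
    |v - z| ≤ C := by
  obtain ⟨θ, h0, h1, rfl⟩ := segment_param hv
  have he : a + θ*(b-a) - z = (1-θ)*(a-z) + θ*(b-z) := by ring
  rw [he]
  calc |(1-θ)*(a-z) + θ*(b-z)| ≤ |(1-θ)*(a-z)| + |θ*(b-z)| := abs_add_le _ _
  _ = (1-θ)*|a-z| + θ*|b-z| := by
      rw [abs_mul, abs_mul, abs_of_nonneg (by linarith : (0:ℝ) ≤ 1-θ), abs_of_nonneg h0]
  _ ≤ (1-θ)*C + θ*C :=
      add_le_add (mul_le_mul_of_nonneg_left ha (by linarith))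
        (mul_le_mul_of_nonneg_left hb h0)
  _ = C := by ring

section Udef

open scoped Classical

variable {D : Set ℝ} {p : ↥D → ℝ} {T : ℝ} {x : ℝ → ℝ}

noncomputable def Jpf (D : Set ℝ) (p : ↥D → ℝ) (t : ℝ) : ℝ := phi D p t - phim D p t

noncomputable def theta (D : Set ℝ) (p : ↥D → ℝ) (T : ℝ) (s : ℝ) : ℝ :=
  if Jpf D p (gfun D p T s) = 0 then 1
  else (s * phi D p T - phim D p (gfun D p T s)) / Jpf D p (gfun D p T s)

noncomputable def ufun (D : Set ℝ) (p : ↥D → ℝ) (T : ℝ) (x : ℝ → ℝ) (s : ℝ) : ℝ :=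
  leftL x (gfun D p T s) + theta D p T s * (x (gfun D p T s) - leftL x (gfun D p T s))

variable (hp : ∀ d, 0 < p d) (hsum : Summable p) (hT : 0 < T)
  (hD : ∀ d : ↥D, 0 < (d:ℝ))
  (hND : ∀ t ∈ Icc (0:ℝ) T, t ∉ D → x t = leftL x t)
include hp hsum hT hD

omit hT hD in
lemma Jp_eq (t : ℝ) : Jpf D p t = if h : t ∈ D then p ⟨t, h⟩ else 0 := by
  have h := sumle_split (fun d => (hp d).le) hsum t
  rw [Jpf, phi, phim]
  linarith [h]

omit hT hD in
lemma Jp_nonneg (t : ℝ) : 0 ≤ Jpf D p t :=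
  sub_nonneg.2 (phim_le_phi (fun d => (hp d).le) hsum t)

omit hT hD in
lemma Jp_pos_iff (t : ℝ) : t ∈ D ↔ 0 < Jpf D p t := by
  rw [Jp_eq hp hsum]
  constructor
  · intro h; rw [dif_pos h]; exact hp _
  · intro h
    by_contra hc
    rw [dif_neg hc] at h
    exact lt_irrefl 0 h

include hND in
omit hT hD in
lemma eq_leftL_of_Jp_zero {t : ℝ} (ht : t ∈ Icc (0:ℝ) T) (h : Jpf D p t = 0) :
    x t = leftL x t := by
  refine hND t ht fun hD' => ?_
  have := (Jp_pos_iff hp hsum t).1 hD'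
  linarith

lemma theta_mem {s : ℝ} (hs : s ∈ Icc (0:ℝ) 1) : theta D p T s ∈ Icc (0:ℝ) 1 := by
  rw [theta]
  split
  · exact ⟨zero_le_one, le_rfl⟩
  · rename_i hJ
    have hJpos : 0 < Jpf D p (gfun D p T s) :=
      lt_of_le_of_ne (Jp_nonneg hp hsum _) (Ne.symm hJ)
    have h1 := key1 (fun d => (hp d).le) hsum hT hD hs
    have h2 := key2 (fun d => (hp d).le) hsum hT hD hs
    have hJd : Jpf D p (gfun D p T s) = phi D p (gfun D p T s) - phim D p (gfun D p T s) := rfl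
    constructor
    · apply div_nonneg _ hJpos.le
      linarith
    · rw [div_le_one hJpos]
      linarith

omit hND in
lemma ufun_mem_segment {s : ℝ} (hs : s ∈ Icc (0:ℝ) 1) :
    ufun D p T x s ∈ segment ℝ (leftL x (gfun D p T s)) (x (gfun D p T s)) := by
  have hθ := theta_mem hp hsum hT hD hs
  exact mem_segment_real hθ.1 hθ.2

include hND in
lemma ufun_surj {t : ℝ} (ht : t ∈ Icc (0:ℝ) T) {v : ℝ}
    (hv : v ∈ segment ℝ (leftL x t) (x t)) :
    ∃ s ∈ Icc (0:ℝ) 1, gfun D p T s = t ∧ ufun D p T x s = v := by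
  have hp' : ∀ d, 0 ≤ p d := fun d => (hp d).le
  have hc := c_pos hp' hsum hT hD
  obtain ⟨θ₀, hθ0, hθ1, hveq⟩ := segment_param hv
  set s := (phim D p t + θ₀ * Jpf D p t) / phi D p T with hsdef
  have hJnn := Jp_nonneg hp hsum t
  have hJd : Jpf D p t = phi D p t - phim D p t := rfl
  have hsc : s * phi D p T = phim D p t + θ₀ * Jpf D p t := by
    rw [hsdef, div_mul_cancel₀ _ hc.ne']
  have h1 : phim D p t ≤ s * phi D p T := by
    rw [hsc]
    nlinarith
  have h2 : s * phi D p T ≤ phi D p t := by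
    rw [hsc]
    nlinarith
  have hsmem : s ∈ Icc (0:ℝ) 1 :=
    ⟨s_ge_zero hp' hsum hT hD ht h1, s_le_one hp' hsum hT hD ht h2⟩
  have hg : gfun D p T s = t := g_eq hp' hsum hT hD ht h1 h2
  refine ⟨s, hsmem, hg, ?_⟩
  rw [ufun, theta, hg]
  by_cases hJ : Jpf D p t = 0
  · rw [if_pos hJ]
    have hxt := eq_leftL_of_Jp_zero hp hsum hND ht hJ
    rw [hveq, hxt]
    ring
  · rw [if_neg hJ, hsc]
    have hJpos : 0 < Jpf D p t := lt_of_le_of_ne hJnn (Ne.symm hJ)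
    rw [hveq]
    congr 1
    have he : phim D p t + θ₀ * Jpf D p t - phim D p t = θ₀ * Jpf D p t := by ring
    rw [he, mul_div_assoc, div_self hJ, mul_one]

omit hND in
lemma ufun_order {s₁ s₂ : ℝ} (hs₁ : s₁ ∈ Icc (0:ℝ) 1) (hs₂ : s₂ ∈ Icc (0:ℝ) 1)
    (h12 : s₁ ≤ s₂) (heq : gfun D p T s₁ = gfun D p T s₂) :
    0 ≤ (ufun D p T x s₂ - ufun D p T x s₁) *
      (x (gfun D p T s₁) - leftL x (gfun D p T s₁)) := by
  have hp' : ∀ d, 0 ≤ p d := fun d => (hp d).le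
  have hc := c_pos hp' hsum hT hD
  set t := gfun D p T s₁ with htdef
  have hdiff : ufun D p T x s₂ - ufun D p T x s₁ =
      (theta D p T s₂ - theta D p T s₁) * (x t - leftL x t) := by
    rw [ufun, ufun, ← heq, ← htdef]
    ring
  rw [hdiff]
  have hθle : theta D p T s₁ ≤ theta D p T s₂ := by
    rw [theta, theta, ← heq, ← htdef]
    by_cases hJ : Jpf D p t = 0
    · rw [if_pos hJ, if_pos hJ]
    · rw [if_neg hJ, if_neg hJ]
      have hJpos : 0 < Jpf D p t := lt_of_le_of_ne (Jp_nonneg hp hsum t) (Ne.symm hJ)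
      refine (div_le_div_iff_of_pos_right hJpos).2 ?_
      nlinarith [mul_le_mul_of_nonneg_right h12 hc.le]
  have h2 : 0 ≤ theta D p T s₂ - theta D p T s₁ := by linarith
  nlinarith [mul_nonneg h2 (mul_self_nonneg (x t - leftL x t))]


include hND in
lemma ufun_contOn (hx : IsCadlagOn T x) : ContinuousOn (ufun D p T x) (Icc 0 1) := by
  have hp' : ∀ d, 0 ≤ p d := fun d => (hp d).le
  have hc := c_pos hp' hsum hT hD
  intro s₀ hs₀
  rw [Metric.continuousWithinAt_iff]
  intro ε hε
  have ht₀ : gfun D p T s₀ ∈ Icc (0:ℝ) T := g_mem hp' hsum hT hD hs₀.1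
  have hε4 : 0 < ε/4 := by linarith
  obtain ⟨δ₀, hδ₀, hLocL, hLocR⟩ := loc' hx ht₀ hε4
  have hgc := g_contOn hp' hsum hT hD s₀ hs₀
  rw [Metric.continuousWithinAt_iff] at hgc
  obtain ⟨δ₁, hδ₁, hgδ⟩ := hgc δ₀ hδ₀
  have hudiff : ∀ s', gfun D p T s' = gfun D p T s₀ →
      ufun D p T x s' - ufun D p T x s₀ = (theta D p T s' - theta D p T s₀) *
        (x (gfun D p T s₀) - leftL x (gfun D p T s₀)) := by
    intro s' h
    rw [ufun, ufun, h]; ring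
  -- δ₂ : same-t case
  obtain ⟨δ₂, hδ₂pos, hδ₂⟩ : ∃ δ₂ > 0, ∀ s', |s' - s₀| < δ₂ →
      gfun D p T s' = gfun D p T s₀ →
      |ufun D p T x s' - ufun D p T x s₀| < ε := by
    by_cases hJ : Jpf D p (gfun D p T s₀) = 0
    · refine ⟨1, one_pos, fun s' hd hgeq => ?_⟩
      have e1 : theta D p T s' = 1 := by rw [theta, hgeq, if_pos hJ]
      have e2 : theta D p T s₀ = 1 := by rw [theta, if_pos hJ]
      rw [hudiff s' hgeq, e1, e2]
      simpa using hε
    · have hJpos : 0 < Jpf D p (gfun D p T s₀) :=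
        lt_of_le_of_ne (Jp_nonneg hp hsum _) (Ne.symm hJ)
      set B := x (gfun D p T s₀) - leftL x (gfun D p T s₀) with hBdef
      refine ⟨ε/2 * Jpf D p (gfun D p T s₀) / (phi D p T * (|B| + 1)), by positivity,
        fun s' hd hgeq => ?_⟩
      have hθdiff : theta D p T s' - theta D p T s₀ =
          (s' - s₀) * phi D p T / Jpf D p (gfun D p T s₀) := by
        rw [theta, theta, hgeq, if_neg hJ, if_neg hJ, div_sub_div_same]
        congr 1
        ring
      rw [hudiff s' hgeq, hθdiff, abs_mul, abs_div, abs_mul,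
        abs_of_nonneg hc.le, abs_of_nonneg hJpos.le, div_mul_eq_mul_div,
        div_lt_iff₀ hJpos]
      have hpos1 : 0 < phi D p T * (|B| + 1) := by positivity
      have h2 := mul_lt_mul_of_pos_right hd hpos1
      rw [div_mul_cancel₀ _ hpos1.ne'] at h2
      nlinarith [mul_nonneg (abs_nonneg (s' - s₀)) hc.le, abs_nonneg B, hJpos, hε]
  -- δ₃ / δ₄ : flat-interval edge control
  obtain ⟨δ₃, hδ₃pos, hδ₃⟩ : ∃ δ₃ > 0, s₀ * phi D p T < phi D p (gfun D p T s₀) →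
      δ₃ ≤ (phi D p (gfun D p T s₀) - s₀ * phi D p T) / phi D p T := by
    by_cases h : s₀ * phi D p T < phi D p (gfun D p T s₀)
    · exact ⟨(phi D p (gfun D p T s₀) - s₀ * phi D p T) / phi D p T,
        div_pos (by linarith) hc, fun _ => le_rfl⟩
    · exact ⟨1, one_pos, fun hh => absurd hh h⟩
  obtain ⟨δ₄, hδ₄pos, hδ₄⟩ : ∃ δ₄ > 0, phim D p (gfun D p T s₀) < s₀ * phi D p T →
      δ₄ ≤ (s₀ * phi D p T - phim D p (gfun D p T s₀)) / phi D p T := by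
    by_cases h : phim D p (gfun D p T s₀) < s₀ * phi D p T
    · exact ⟨(s₀ * phi D p T - phim D p (gfun D p T s₀)) / phi D p T,
        div_pos (by linarith) hc, fun _ => le_rfl⟩
    · exact ⟨1, one_pos, fun hh => absurd hh h⟩
  refine ⟨min (min δ₁ δ₂) (min δ₃ δ₄), by positivity, fun s' hs' hdist => ?_⟩
  rw [Real.dist_eq] at hdist
  have hd1 : |s' - s₀| < δ₁ := lt_of_lt_of_le hdist (le_trans (min_le_left _ _) (min_le_left _ _))
  have hd2 : |s' - s₀| < δ₂ := lt_of_lt_of_le hdist (le_trans (min_le_left _ _) (min_le_right _ _))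
  have hd3 : |s' - s₀| < δ₃ := lt_of_lt_of_le hdist (le_trans (min_le_right _ _) (min_le_left _ _))
  have hd4 : |s' - s₀| < δ₄ := lt_of_lt_of_le hdist (le_trans (min_le_right _ _) (min_le_right _ _))
  have hgd : |gfun D p T s' - gfun D p T s₀| < δ₀ := by
    have := hgδ hs' (by rwa [Real.dist_eq])
    rwa [Real.dist_eq] at this
  have ht' : gfun D p T s' ∈ Icc (0:ℝ) T := g_mem hp' hsum hT hD hs'.1
  rw [Real.dist_eq]
  rcases lt_trichotomy (gfun D p T s') (gfun D p T s₀) with hlt|heqt|hgt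
  · -- left case
    have hmono : s' < s₀ := by
      by_contra hcon
      push_neg at hcon
      exact absurd (g_monoOn hp' hsum hT hD hs₀ hs' hcon) (not_le.2 hlt)
    have hkey1 : s' * phi D p T ≤ phi D p (gfun D p T s') := key1 hp' hsum hT hD hs'
    have hkey2 : phim D p (gfun D p T s₀) ≤ s₀ * phi D p T := key2 hp' hsum hT hD hs₀
    have hphim : phi D p (gfun D p T s') ≤ phim D p (gfun D p T s₀) := phi_le_phim hp' hsum hlt
    rcases eq_or_lt_of_le hkey2 with heq|hstrict
    · -- u s₀ = leftL x t₀
      have hu0 : ufun D p T x s₀ = leftL x (gfun D p T s₀) := by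
        rw [ufun, theta]
        by_cases hJ : Jpf D p (gfun D p T s₀) = 0
        · rw [if_pos hJ]
          rw [eq_leftL_of_Jp_zero hp hsum hND ht₀ hJ]
          ring
        · rw [if_neg hJ, ← heq, sub_self, zero_div, zero_mul, add_zero]
      have hLb := hLocL (gfun D p T s') ht' (by cases abs_lt.1 hgd; linarith) hlt
      have hsegm := ufun_mem_segment (x := x) hp hsum hT hD hs'
      have := seg_dist hsegm hLb.2 hLb.1
      rw [hu0]
      linarith
    · -- impossible: s₀ - s' too large
      exfalso
      have h1 : s' * phi D p T ≤ phim D p (gfun D p T s₀) := le_trans hkey1 hphim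
      have h2 : s₀ - s' ≥ (s₀ * phi D p T - phim D p (gfun D p T s₀)) / phi D p T := by
        rw [ge_iff_le, div_le_iff₀ hc]
        nlinarith
      have h3 := hδ₄ hstrict
      have h4 : |s' - s₀| = s₀ - s' := by rw [abs_sub_comm, abs_of_nonneg (by linarith)]
      linarith [hd4, h4 ▸ hd4]
  · -- same t
    exact hδ₂ s' hd2 heqt
  · -- right case
    have hmono : s₀ < s' := by
      by_contra hcon
      push_neg at hcon
      exact absurd (g_monoOn hp' hsum hT hD hs' hs₀ hcon) (not_le.2 hgt)
    have hkey1 : s₀ * phi D p T ≤ phi D p (gfun D p T s₀) := key1 hp' hsum hT hD hs₀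
    have hkey2 : phim D p (gfun D p T s') ≤ s' * phi D p T := key2 hp' hsum hT hD hs'
    have hphim : phi D p (gfun D p T s₀) ≤ phim D p (gfun D p T s') := phi_le_phim hp' hsum hgt
    rcases eq_or_lt_of_le hkey1 with heq|hstrict
    · -- u s₀ = x t₀
      have hu0 : ufun D p T x s₀ = x (gfun D p T s₀) := by
        rw [ufun, theta]
        by_cases hJ : Jpf D p (gfun D p T s₀) = 0
        · rw [if_pos hJ]; ring
        · rw [if_neg hJ]
          have hnum : s₀ * phi D p T - phim D p (gfun D p T s₀) = Jpf D p (gfun D p T s₀) := by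
            rw [Jpf, ← heq]
          rw [hnum, div_self hJ]; ring
      have hRb := hLocR (gfun D p T s') ht' (by linarith) (by cases abs_lt.1 hgd; linarith)
      have hsegm := ufun_mem_segment (x := x) hp hsum hT hD hs'
      have := seg_dist hsegm (hRb.2 hgt) hRb.1
      rw [hu0]
      linarith
    · exfalso
      have h1 : phi D p (gfun D p T s₀) ≤ s' * phi D p T := le_trans hphim hkey2
      have h2 : s' - s₀ ≥ (phi D p (gfun D p T s₀) - s₀ * phi D p T) / phi D p T := by
        rw [ge_iff_le, div_le_iff₀ hc]
        nlinarith
      have h3 := hδ₃ hstrict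
      have h4 : |s' - s₀| = s' - s₀ := abs_of_nonneg (by linarith)
      linarith [hd3]

end Udef

lemma exists_paramRep {T : ℝ} {x : ℝ → ℝ} (hT : 0 < T) (hx : IsCadlagOn T x) :
    ∃ u r : ℝ → ℝ, IsParamRep T x u r := by
  classical
  have hDc : (Dset T x).Countable := Dset_countable hT hx
  haveI hctble : Countable ↥(Dset T x) := hDc.to_subtype
  obtain ⟨e, he⟩ := exists_injective_nat ↥(Dset T x)
  set p : ↥(Dset T x) → ℝ := fun d => (1/2 : ℝ)^(e d) with hpdef
  have hp : ∀ d, 0 < p d := fun d => by positivity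
  have hsump : Summable p := by
    have h1 : Summable (fun n : ℕ => (1/2 : ℝ)^n) :=
      summable_geometric_of_lt_one (by norm_num) (by norm_num)
    exact h1.comp_injective he
  have hD : ∀ d : ↥(Dset T x), 0 < (d:ℝ) := fun d => Dset_pos d.2
  have hND : ∀ t ∈ Icc (0:ℝ) T, t ∉ Dset T x → x t = leftL x t := by
    intro t ht hn
    by_contra hc
    exact hn ⟨ht, hc⟩
  exact ⟨ufun (Dset T x) p T x, gfun (Dset T x) p T,
    ufun_contOn hp hsump hT hD hND hx,
    g_contOn (fun d => (hp d).le) hsump hT hD,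
    g_monoOn (fun d => (hp d).le) hsump hT hD,
    g_zero (fun d => (hp d).le) hsump hT hD,
    g_one (fun d => (hp d).le) hsump hT hD,
    fun s hs => ufun_mem_segment hp hsump hT hD hs,
    fun t ht v hv => ufun_surj hp hsump hT hD hND ht hv,
    fun s₁ hs₁ s₂ hs₂ h12 heq => ufun_order hp hsump hT hD hs₁ hs₂ h12 heq⟩

end M1P


/-- Lemma 4.2(b): if `xₙ → x` in `(D, M₁)` then
`limsup ‖xₙ - x‖ ≤ 3 J_max(x)`. -/
theorem limsup_uniform_distance_le_three_jmax
    (T : ℝ) (hT : 0 < T)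
    (x : ℕ → ℝ → ℝ) (x₀ : ℝ → ℝ)
    (hxc : ∀ n, IsCadlagOn T (x n)) (hx₀c : IsCadlagOn T x₀)
    (hconv : Filter.Tendsto (fun n => dM1 T (x n) x₀) Filter.atTop (nhds 0)) :
    Filter.limsup (fun n => supT T fun t => x n t - x₀ t) Filter.atTop ≤
      3 * Jmax T x₀ := by
  classical
  have hJ0 : 0 ≤ Jmax T x₀ := M1P.Jmax_nonneg hT
  haveI : Nonempty ↥(Icc (0:ℝ) T) := ⟨⟨0, le_rfl, hT.le⟩⟩
  haveI : Nonempty ↥(Icc (0:ℝ) 1) := ⟨⟨0, le_rfl, zero_le_one⟩⟩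
  have key : ∀ ε > 0, ∀ᶠ n in Filter.atTop,
      supT T (fun t => x n t - x₀ t) ≤ 3 * Jmax T x₀ + ε := by
    intro ε hε
    obtain ⟨δ, hδ, hosc⟩ := M1P.glob hT hx₀c (ε := ε/8) (by linarith)
    have hη : 0 < min δ (ε/2) := lt_min hδ (by linarith)
    have hev : ∀ᶠ n in Filter.atTop, dM1 T (x n) x₀ < min δ (ε/2) :=
      hconv.eventually (gt_mem_nhds hη)
    filter_upwards [hev] with n hn
    -- the distance set is nonempty thanks to existence of parametric representations
    obtain ⟨ua, ra, hrepa⟩ := M1P.exists_paramRep hT (hxc n)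
    obtain ⟨ub, rb, hrepb⟩ := M1P.exists_paramRep hT hx₀c
    have hSne : {d : ℝ | ∃ ux rx uy ry : ℝ → ℝ, IsParamRep T (x n) ux rx ∧
        IsParamRep T x₀ uy ry ∧
        d = max (unif fun s => ux s - uy s) (unif fun s => rx s - ry s)}.Nonempty :=
      ⟨_, ua, ra, ub, rb, hrepa, hrepb, rfl⟩
    obtain ⟨d, hdS, hdlt⟩ := exists_lt_of_csInf_lt hSne hn
    obtain ⟨u₁, r₁, u₂, r₂, hrep1, hrep2, hdeq⟩ := hdS
    -- uniform norms are attained bounds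
    have hbdd1 : BddAbove (Set.range fun s : Icc (0:ℝ) 1 => |u₁ s.1 - u₂ s.1|) := by
      rw [show (fun s : Icc (0:ℝ) 1 => |u₁ s.1 - u₂ s.1|) =
        (Icc (0:ℝ) 1).domRestrict (fun s => |u₁ s - u₂ s|) from rfl, Set.range_domRestrict]
      exact (isCompact_Icc.image_of_continuousOn ((hrep1.1.sub hrep2.1).abs)).bddAbove
    have hbdd2 : BddAbove (Set.range fun s : Icc (0:ℝ) 1 => |r₁ s.1 - r₂ s.1|) := by
      rw [show (fun s : Icc (0:ℝ) 1 => |r₁ s.1 - r₂ s.1|) =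
        (Icc (0:ℝ) 1).domRestrict (fun s => |r₁ s - r₂ s|) from rfl, Set.range_domRestrict]
      exact (isCompact_Icc.image_of_continuousOn
        ((hrep1.2.1.sub hrep2.2.1).abs)).bddAbove
    -- pointwise bound
    refine ciSup_le fun t => ?_
    obtain ⟨s, hs, hrs, hus⟩ := hrep1.2.2.2.2.2.2.1 t.1 t.2 (x n t.1)
      (right_mem_segment ℝ _ _)
    have hb1 : |u₁ s - u₂ s| ≤ d := by
      have h1 : |u₁ s - u₂ s| ≤ unif (fun s => u₁ s - u₂ s) :=
        le_ciSup hbdd1 (⟨s, hs⟩ : Icc (0:ℝ) 1)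
      rw [hdeq]
      exact h1.trans (le_max_left _ _)
    have hb2 : |r₁ s - r₂ s| ≤ d := by
      have h1 : |r₁ s - r₂ s| ≤ unif (fun s => r₁ s - r₂ s) :=
        le_ciSup hbdd2 (⟨s, hs⟩ : Icc (0:ℝ) 1)
      rw [hdeq]
      exact h1.trans (le_max_right _ _)
    have ht' : r₂ s ∈ Icc (0:ℝ) T := by
      constructor
      · have := hrep2.2.2.1 ⟨le_rfl, zero_le_one⟩ hs hs.1
        rw [hrep2.2.2.2.1] at this
        exact this
      · have := hrep2.2.2.1 hs ⟨zero_le_one, le_rfl⟩ hs.2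
        rw [hrep2.2.2.2.2.1] at this
        exact this
    have hseg : u₂ s ∈ segment ℝ (leftL x₀ (r₂ s)) (x₀ (r₂ s)) :=
      hrep2.2.2.2.2.2.1 s hs
    have hdist : |r₂ s - t.1| ≤ δ := by
      rw [← hrs, abs_sub_comm]
      have := min_le_left δ (ε/2)
      linarith
    have hoscb := hosc t.1 t.2 (r₂ s) ht' hdist
    have hu2 : |u₂ s - x₀ t.1| ≤ 2 * (Jmax T x₀ + ε/8) :=
      M1P.seg_dist hseg hoscb.2 hoscb.1
    have hfinal : |x n t.1 - x₀ t.1| ≤ d + 2 * (Jmax T x₀ + ε/8) := by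
      rw [← hus]
      have := abs_sub_le (u₁ s) (u₂ s) (x₀ t.1)
      linarith
    have hd2 : d ≤ ε/2 := le_trans hdlt.le (min_le_right _ _)
    calc |x n t.1 - x₀ t.1| ≤ d + 2 * (Jmax T x₀ + ε/8) := hfinal
    _ ≤ 3 * Jmax T x₀ + ε := by linarith
  have hnonneg : ∀ m, 0 ≤ supT T (fun t => x m t - x₀ t) :=
    fun m => Real.iSup_nonneg fun _ => abs_nonneg _
  rw [Filter.limsup_eq]
  refine le_of_forall_pos_le_add fun ε hε => ?_
  refine csInf_le ?_ (key ε hε)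
  refine ⟨0, fun a ha => ?_⟩
  obtain ⟨m, hm⟩ := ha.exists
  exact le_trans (hnonneg m) hm
end
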